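/- arXiv:2109.06601 — 7 statements merged into one kernel-verified Lean document; each statement's English description precedes it below -/
import Mathlib

section
/- If G is an even-hole-free graph (containing no induced cycle with an even number of vertices) and α, β are two vertex covers of G, then the subgraph induced by α ⊕ β is a forest (contains no cycle). -/
/-- `S` is a vertex cover of `G`: every edge has at least one endpoint in `S`. -/
def IsVertexCover {V : Type*} (G : SimpleGraph V) (S : Set V) : Prop :=
  ∀ ⦃u v : V⦄, G.Adj u v → u ∈ S ∨ v ∈ S

/-- `G` is even-hole-free: it contains no induced cycle with an even number
of vertices, i.e., no induced subgraph of `G` is isomorphic to a cycle graph on an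
even number `n ≥ 3` (hence `n ≥ 4`) of vertices. -/
def EvenHoleFree {V : Type*} (G : SimpleGraph V) : Prop :=
  ¬ ∃ (n : ℕ) (W : Set V), Even n ∧ 3 ≤ n ∧
    Nonempty (G.induce W ≃g SimpleGraph.cycleGraph n)

open SimpleGraph Walk in
private theorem aux_walk_support_tail_eq {V:Type*} {G:SimpleGraph V} {u v : V} (p : G.Walk u v) :
    p.support.tail = (List.range p.length).map (fun k => p.getVert (k+1)) := by
  have : p.support = (List.range (p.length+1)).map p.getVert := by
    induction p with
    | nil => rfl
    | cons h q ih =>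
      rw [support_cons, length_cons, List.range_succ_eq_map, List.map_cons, List.map_map]
      simp only [getVert_zero, Function.comp_def, getVert_cons_succ, ← ih]
  rw [this, List.range_succ_eq_map, List.map_cons, List.tail_cons, List.map_map]
  rfl

open SimpleGraph Walk in
private theorem aux_cycle_getVert_inj {V:Type*} {G:SimpleGraph V} {v : V} {p : G.Walk v v}
    (hp : p.IsCycle) {i j : ℕ} (hi : i < p.length) (hj : j < p.length)
    (h : p.getVert i = p.getVert j) : i = j := by
  have hnd : p.support.tail.Nodup := hp.2
  rw [aux_walk_support_tail_eq] at hnd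
  have hinj := List.inj_on_of_nodup_map hnd
  have key : ∀ a b : ℕ, 1 ≤ a → a ≤ p.length → 1 ≤ b → b ≤ p.length →
      p.getVert a = p.getVert b → a = b := by
    intro a b ha1 ha2 hb1 hb2 hab
    have h1 : a - 1 + 1 = a := by omega
    have h2 : b - 1 + 1 = b := by omega
    have := hinj (List.mem_range.mpr (show a-1 < p.length by omega))
      (List.mem_range.mpr (show b-1 < p.length by omega)) (by rw [h1, h2]; exact hab)
    omega
  have hv0 : p.getVert 0 = v := p.getVert_zero
  have hvn : p.getVert p.length = v := p.getVert_length
  rcases Nat.eq_zero_or_pos i with hi0 | hi1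
  · rcases Nat.eq_zero_or_pos j with hj0 | hj1
    · omega
    · subst hi0
      have : p.length = j := key _ _ (by omega) le_rfl hj1 (by omega) (by rw [hvn, ← h, hv0])
      omega
  · rcases Nat.eq_zero_or_pos j with hj0 | hj1
    · subst hj0
      have : i = p.length := key _ _ hi1 (by omega) (by omega) le_rfl (by rw [hvn, h, hv0])
      omega
    · exact key _ _ hi1 (by omega) hj1 (by omega) h

open SimpleGraph Walk in
private theorem aux_closed_mem_support_tail {V:Type*} {G:SimpleGraph V} {v : V} {p : G.Walk v v}
    (hl : 0 < p.length) {x : V} (hx : x ∈ p.support) : x ∈ p.support.tail := by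
  obtain ⟨k, hk, hkle⟩ := (Walk.mem_support_iff_exists_getVert).mp hx
  rw [aux_walk_support_tail_eq]
  rcases Nat.eq_zero_or_pos k with rfl | h1
  · refine List.mem_map.mpr ⟨p.length - 1, List.mem_range.mpr (by omega), ?_⟩
    rw [show p.length - 1 + 1 = p.length by omega, p.getVert_length, ← hk, p.getVert_zero]
  · exact List.mem_map.mpr ⟨k-1, List.mem_range.mpr (by omega),
      by rw [show k-1+1 = k by omega]; exact hk⟩

open SimpleGraph Walk in
private theorem aux_walk_length_rotate {V:Type*} {G:SimpleGraph V} [DecidableEq V] {u v : V}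
    (c : G.Walk v v) (h : u ∈ c.support) : (c.rotate u h).length = c.length := by
  have h1 := congrArg Walk.length (c.take_spec h)
  rw [length_append] at h1
  unfold Walk.rotate
  rw [length_append]
  omega

open SimpleGraph Walk in
private theorem aux_chord_mem_edges {V:Type*} {G:SimpleGraph V} {v : V} {p : G.Walk v v}
    (hp : p.IsCycle)
    (hmin : ∀ (u:V) (q : G.Walk u u), q.IsCycle → p.length ≤ q.length)
    {a b : V} (hab : G.Adj a b) (ha : a ∈ p.support) (hb : b ∈ p.support) :
    s(a,b) ∈ p.edges := by
  classical
  by_contra hne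
  have hpl : 3 ≤ p.length := hp.three_le_length
  set q := p.rotate b hb with hqdef
  have hqc : q.IsCycle := hp.rotate hb
  have hql : q.length = p.length := aux_walk_length_rotate p hb
  have haq : a ∈ q.support := by
    rw [support_eq_cons q]
    exact List.mem_cons_of_mem _
      ((support_rotate p b hb).mem_iff.mpr (aux_closed_mem_support_tail (by omega) ha))
  have hedgeq : s(a,b) ∉ q.edges := fun hmem => hne ((rotate_edges p b hb).mem_iff.mp hmem)
  set t := q.takeUntil a haq with htdef
  set d := q.dropUntil a haq with hddef
  have hts : t.append d = q := q.take_spec haq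
  have hlen : t.length + d.length = p.length := by
    have := congrArg Walk.length hts
    rw [length_append] at this
    omega
  have hsupp : q.support.tail = t.support.tail ++ d.support.tail := by
    have h1 : q.support = t.support ++ d.support.tail := by
      rw [← hts, support_append]
    rw [support_eq_cons t] at h1
    rw [support_eq_cons q] at h1
    exact (List.cons.injEq _ _ _ _ ▸ h1).2
  have hnd : (t.support.tail ++ d.support.tail).Nodup := hsupp ▸ hqc.2
  have hat : a ∈ t.support.tail := by
    have := t.end_mem_support
    rw [support_eq_cons t] at this
    rcases List.mem_cons.mp this with h | h
    · exact absurd h hab.ne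
    · exact h
  have hbd : b ∈ d.support.tail := by
    have := d.end_mem_support
    rw [support_eq_cons d] at this
    rcases List.mem_cons.mp this with h | h
    · exact absurd h hab.ne'
    · exact h
  rw [List.nodup_append] at hnd
  have htpath : t.IsPath := by
    rw [isPath_def, support_eq_cons t, List.nodup_cons]
    exact ⟨fun hbt => hnd.2.2 _ hbt _ hbd rfl, hnd.1⟩
  have hdpath : d.IsPath := by
    rw [isPath_def, support_eq_cons d, List.nodup_cons]
    exact ⟨fun had => hnd.2.2 _ hat _ had rfl, hnd.2.1⟩
  have hnt : s(a,b) ∉ t.edges := fun h => hedgeq (q.edges_takeUntil_subset haq h)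
  have hndd : s(a,b) ∉ d.edges := fun h => hedgeq (q.edges_dropUntil_subset haq h)
  have hc1 : (Walk.cons hab t).IsCycle :=
    (cons_isCycle_iff _ _).mpr ⟨htpath, hnt⟩
  have hc2 : (Walk.cons hab.symm d).IsCycle :=
    (cons_isCycle_iff _ _).mpr ⟨hdpath, by rwa [Sym2.eq_swap]⟩
  have h1 := hmin _ _ hc1
  have h2 := hmin _ _ hc2
  rw [length_cons] at h1 h2
  omega

private lemma aux_fin_sub_one_iff {n : ℕ} (hn : 2 ≤ n) (i j : Fin n) :
    (j - i).val = 1 ↔ j.val = (i.val + 1) % n := by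
  rw [Fin.sub_def]
  simp only [Fin.val_mk]
  rw [Nat.add_comm (n - i.val) j.val]
  have hi := i.isLt
  have hj := j.isLt
  rcases Nat.lt_or_ge (j.val + (n - i.val)) n with h | h
  · rw [Nat.mod_eq_of_lt h]
    rcases Nat.lt_or_ge (i.val+1) n with h2 | h2
    · rw [Nat.mod_eq_of_lt h2]; omega
    · have : (i.val+1) % n = 0 := by
        have : i.val + 1 = n := by omega
        simp [this]
      omega
  · have h3 : (j.val + (n - i.val)) % n = j.val - i.val := by
      have : j.val + (n - i.val) - n = j.val - i.val := by omega
      rw [Nat.mod_eq_sub_mod h, this, Nat.mod_eq_of_lt (by omega)]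
    rw [h3]
    rcases Nat.lt_or_ge (i.val+1) n with h2 | h2
    · rw [Nat.mod_eq_of_lt h2]; omega
    · have h4 : (i.val+1) % n = 0 := by
        have : i.val + 1 = n := by omega
        simp [this]
      rw [h4]
      omega

/-- If `G` is even-hole-free and `α, β` are vertex covers, then the subgraph induced by
the symmetric difference `α ⊕ β` is a forest (acyclic). -/
theorem evenHoleFree_symmDiff_isAcyclic {V : Type*} (G : SimpleGraph V)
    (hG : EvenHoleFree G) (α β : Set V)
    (hα : IsVertexCover G α) (hβ : IsVertexCover G β) :
    (G.induce (symmDiff α β)).IsAcyclic := by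
  classical
  by_contra hac
  have hex : ∃ n, ∃ (u : ↥(symmDiff α β)) (q : (G.induce (symmDiff α β)).Walk u u),
      q.IsCycle ∧ q.length = n := by
    by_contra h
    push_neg at h
    exact hac fun v c hc => (h c.length v c hc rfl).elim
  obtain ⟨u, p, hp, hplen⟩ := Nat.find_spec hex
  have hmin : ∀ (w : ↥(symmDiff α β)) (q : (G.induce (symmDiff α β)).Walk w w),
      q.IsCycle → p.length ≤ q.length := fun w q hq => by
    rw [hplen]; exact Nat.find_le ⟨w, q, hq, rfl⟩
  have hn3 : 3 ≤ p.length := hp.three_le_length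
  set n := p.length with hn
  -- 2-coloring from the vertex covers: every closed walk is even
  have hcol : ∀ ⦃x y : ↥(symmDiff α β)⦄, (G.induce (symmDiff α β)).Adj x y →
      (decide (x.1 ∈ α)) ≠ (decide (y.1 ∈ α)) := by
    intro x y hxy hdeq
    have hadj : G.Adj x.1 y.1 := hxy
    have hx := x.2
    have hy := y.2
    rw [Set.mem_symmDiff] at hx hy
    simp only [decide_eq_decide] at hdeq
    by_cases hxa : x.1 ∈ α
    · have hya : y.1 ∈ α := hdeq.mp hxa
      rcases hβ hadj with h | h <;> tauto
    · have hya : y.1 ∉ α := fun h => hxa (hdeq.mpr h)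
      rcases hα hadj with h | h <;> tauto
  have heven : Even n :=
    ((SimpleGraph.Coloring.mk (fun x => decide (x.1 ∈ α)) (fun {x y} h => hcol h)).even_length_iff_congr p).mpr
      Iff.rfl
  have hmem : ∀ i : ℕ, p.getVert i ∈ p.support := fun i => by
    rcases Nat.lt_or_ge i (n+1) with h | h
    · exact SimpleGraph.Walk.mem_support_iff_exists_getVert.mpr ⟨i, rfl, by omega⟩
    · rw [SimpleGraph.Walk.getVert_of_length_le p (by omega : p.length ≤ i)]
      exact p.end_mem_support
  have hconsec : ∀ i : ℕ, i < n →
      (G.induce (symmDiff α β)).Adj (p.getVert i) (p.getVert ((i+1) % n)) := by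
    intro i hi
    rcases Nat.lt_or_ge (i+1) n with h | h
    · rw [Nat.mod_eq_of_lt h]
      exact p.adj_getVert_succ hi
    · have h1 : i + 1 = n := by omega
      have h2 := p.adj_getVert_succ hi
      rw [show i + 1 = p.length by omega, p.getVert_length] at h2
      rw [show (i+1) % n = 0 by rw [h1]; simp, p.getVert_zero]
      exact h2
  have hidx : ∀ k i j : ℕ, k < n → i < n → j < n →
      p.getVert k = p.getVert i → p.getVert (k+1) = p.getVert j → j = (i+1) % n := by
    intro k i j hk hi hj h1 h2
    have hki : k = i := aux_cycle_getVert_inj hp hk hi h1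
    subst hki
    rcases Nat.lt_or_ge (k+1) n with h | h
    · have := aux_cycle_getVert_inj hp h hj h2
      rw [Nat.mod_eq_of_lt h]; omega
    · have hk1 : k + 1 = n := by omega
      rw [show k + 1 = p.length by omega, p.getVert_length] at h2
      have h2' : p.getVert 0 = p.getVert j := by rw [p.getVert_zero]; exact h2
      have := aux_cycle_getVert_inj hp (show 0 < p.length by omega) hj h2'
      rw [hk1, Nat.mod_self]
      omega
  have hchar : ∀ i j : Fin n, G.Adj (p.getVert i.val).1 (p.getVert j.val).1 ↔
      (j.val = (i.val+1) % n ∨ i.val = (j.val+1) % n) := by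
    intro i j
    constructor
    · intro hGadj
      have hH : (G.induce (symmDiff α β)).Adj (p.getVert i.val) (p.getVert j.val) := hGadj
      have hedge := aux_chord_mem_edges hp hmin hH (hmem i.val) (hmem j.val)
      have hadj' : p.toSubgraph.Adj (p.getVert i.val) (p.getVert j.val) := by
        rw [← SimpleGraph.Subgraph.mem_edgeSet, SimpleGraph.Walk.mem_edges_toSubgraph]
        exact hedge
      obtain ⟨k, hk1, hk2⟩ := (SimpleGraph.Walk.toSubgraph_adj_iff _).mp hadj'
      rw [Sym2.eq_iff] at hk1
      rcases hk1 with ⟨ha, hb⟩ | ⟨ha, hb⟩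
      · left; exact hidx k i.val j.val hk2 i.isLt j.isLt ha hb
      · right; exact hidx k j.val i.val hk2 j.isLt i.isLt ha hb
    · intro hij
      rcases hij with h | h
      · have h2 := hconsec i.val i.isLt
        rw [← h] at h2
        exact h2
      · have h2 := hconsec j.val j.isLt
        rw [← h] at h2
        exact h2.symm
  set W : Set V := Set.range (fun i : Fin n => ((p.getVert i.val : ↥(symmDiff α β)) : V))
    with hW
  have hbij : Function.Bijective
      (fun i : Fin n => (⟨(p.getVert i.val).1, ⟨i, rfl⟩⟩ : ↥W)) := by
    constructor
    · intro i j hij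
      have h1 := congrArg Subtype.val hij
      exact Fin.ext (aux_cycle_getVert_inj hp i.isLt j.isLt (Subtype.ext h1))
    · rintro ⟨x, ⟨i, rfl⟩⟩
      exact ⟨i, rfl⟩
  refine hG ⟨n, W, heven, by omega, ⟨RelIso.symm ⟨Equiv.ofBijective _ hbij, ?_⟩⟩⟩
  intro i j
  show G.Adj (p.getVert i.val).1 (p.getVert j.val).1 ↔ (SimpleGraph.cycleGraph n).Adj i j
  rw [hchar i j, SimpleGraph.cycleGraph_adj',
    aux_fin_sub_one_iff (by omega) i j, aux_fin_sub_one_iff (by omega) j i]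
  tauto
end

section
/- If G is a claw-free graph (no induced K_{1,3}) and α, β are two vertex covers of G, then every vertex of the subgraph induced by α ⊕ β has degree at most 2 in that subgraph; consequently every connected component of G[α ⊕ β] is a path or a cycle. -/
/-- `G` is claw-free: it has no induced subgraph isomorphic to `K_{1,3}`, i.e. no vertex `v`
with three pairwise distinct, pairwise non-adjacent neighbors. -/
def ClawFree {V : Type*} (G : SimpleGraph V) : Prop :=
  ¬ ∃ v a b c : V, a ≠ b ∧ a ≠ c ∧ b ≠ c ∧
      G.Adj v a ∧ G.Adj v b ∧ G.Adj v c ∧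
      ¬ G.Adj a b ∧ ¬ G.Adj a c ∧ ¬ G.Adj b c

/-- If `G` is claw-free and `α, β` are vertex covers of `G`, then every vertex of the subgraph
induced by the symmetric difference `α ⊕ β` has degree at most 2 there: a vertex
`v ∈ α ⊕ β` cannot have three distinct neighbors inside `α ⊕ β`. -/
theorem clawFree_symmDiff_degree_le_two {V : Type*} (G : SimpleGraph V)
    (hG : ClawFree G) (α β : Set V)
    (hα : IsVertexCover G α) (hβ : IsVertexCover G β) :
    ∀ v ∈ symmDiff α β, ∀ a ∈ symmDiff α β, ∀ b ∈ symmDiff α β, ∀ c ∈ symmDiff α β,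
      G.Adj v a → G.Adj v b → G.Adj v c → (a = b ∨ a = c ∨ b = c) := by
  -- two vertices on the same side of the symmetric difference are non-adjacent
  have indep1 : ∀ u w : V, u ∈ α → u ∉ β → w ∈ α → w ∉ β → ¬ G.Adj u w := by
    intro u w h1 h2 h3 h4 hadj
    rcases hβ hadj with h | h <;> tauto
  have indep2 : ∀ u w : V, u ∈ β → u ∉ α → w ∈ β → w ∉ α → ¬ G.Adj u w := by
    intro u w h1 h2 h3 h4 hadj
    rcases hα hadj with h | h <;> tauto
  intro v hv a ha b hb c hc hva hvb hvc
  by_contra h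
  push_neg at h
  obtain ⟨hab, hac, hbc⟩ := h
  rw [Set.mem_symmDiff] at hv ha hb hc
  apply hG
  refine ⟨v, a, b, c, hab, hac, hbc, hva, hvb, hvc, ?_, ?_, ?_⟩ <;>
  · rcases hv with ⟨h1, h2⟩ | ⟨h1, h2⟩
    · -- v ∈ α \ β, so a,b,c ∈ β \ α
      rcases ha with ⟨ha1, ha2⟩ | ⟨ha1, ha2⟩
      · exact absurd hva (indep1 v a h1 h2 ha1 ha2)
      · rcases hb with ⟨hb1, hb2⟩ | ⟨hb1, hb2⟩
        · exact absurd hvb (indep1 v b h1 h2 hb1 hb2)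
        · rcases hc with ⟨hc1, hc2⟩ | ⟨hc1, hc2⟩
          · exact absurd hvc (indep1 v c h1 h2 hc1 hc2)
          · first
            | exact indep2 a b ha1 ha2 hb1 hb2
            | exact indep2 a c ha1 ha2 hc1 hc2
            | exact indep2 b c hb1 hb2 hc1 hc2
    · rcases ha with ⟨ha1, ha2⟩ | ⟨ha1, ha2⟩
      · rcases hb with ⟨hb1, hb2⟩ | ⟨hb1, hb2⟩
        · rcases hc with ⟨hc1, hc2⟩ | ⟨hc1, hc2⟩
          · first
            | exact indep1 a b ha1 ha2 hb1 hb2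
            | exact indep1 a c ha1 ha2 hc1 hc2
            | exact indep1 b c hb1 hb2 hc1 hc2
          · exact absurd hvc (indep2 v c h1 h2 hc1 hc2)
        · exact absurd hvb (indep2 v b h1 h2 hb1 hb2)
      · exact absurd hva (indep2 v a h1 h2 ha1 ha2)
end

section
/- Let G = (A ∪ B, E) be the path graph on 2n vertices viewed as a bipartite graph with parts A and B of size n each (both A and B are minimum vertex covers). Then for every 1 ≤ t < n, in any reconfiguration schedule from A to B consisting of t+1 batches, some intermediate vertex cover has size at least n(1 + 1/t). -/
/-- `S` is an independent set of `G`. -/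
def IsIndepSet {V : Type*} (G : SimpleGraph V) (S : Set V) : Prop :=
  ∀ ⦃u v : V⦄, u ∈ S → v ∈ S → ¬ G.Adj u v

/-- `f` is a vertex cover reconfiguration schedule of length `ℓ` from `α` to `β` in `G`:
each `f i` is a vertex cover, `f 0 = α`, `f ℓ = β`, and each batch `f i ⊕ f (i+1)` is an
independent set. -/
def IsVCSchedule {V : Type*} (G : SimpleGraph V) (ℓ : ℕ) (f : ℕ → Set V)
    (α β : Set V) : Prop :=
  f 0 = α ∧ f ℓ = β ∧ (∀ i ≤ ℓ, IsVertexCover G (f i)) ∧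
    ∀ i < ℓ, IsIndepSet G (symmDiff (f i) (f (i + 1)))

/-- In the path graph on `2n` vertices with parts `A` (even positions) and `B` (odd
positions), for every `1 ≤ t < n`, any reconfiguration schedule from `A` to `B` with
`t + 1` batches has an intermediate vertex cover of size at least `n(1 + 1/t)`. -/
theorem path_batch_lower_bound (n t : ℕ) (ht1 : 1 ≤ t) (htn : t < n)
    (f : ℕ → Set (Fin (2 * n)))
    (hf : IsVCSchedule (SimpleGraph.pathGraph (2 * n)) (t + 1) f
      {v : Fin (2 * n) | Even v.val} {v : Fin (2 * n) | Odd v.val}) :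
    ∃ i ≤ t + 1, n * (t + 1) ≤ t * (f i).ncard := by
  classical
  obtain ⟨h0, hT, hcov, hind⟩ := hf
  have hja : ∀ j : Fin n, 2 * j.val < 2 * n := fun j => by have := j.isLt; omega
  have hjb : ∀ j : Fin n, 2 * j.val + 1 < 2 * n := fun j => by have := j.isLt; omega
  set a : Fin n → Fin (2 * n) := fun j => ⟨2 * j.val, hja j⟩ with ha_def
  set b : Fin n → Fin (2 * n) := fun j => ⟨2 * j.val + 1, hjb j⟩ with hb_def
  have hadj : ∀ j, (SimpleGraph.pathGraph (2 * n)).Adj (a j) (b j) := fun j =>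
    SimpleGraph.pathGraph_adj.mpr (Or.inl rfl)
  -- Step 1: for each pair, there is a step 1 ≤ i ≤ t with both endpoints in f i
  have key : ∀ j : Fin n, ∃ i, 1 ≤ i ∧ i ≤ t ∧ a j ∈ f i ∧ b j ∈ f i := by
    intro j
    have hbT : b j ∈ f (t + 1) := by
      rw [hT]
      show Odd (2 * j.val + 1)
      exact ⟨j.val, by ring⟩
    have hex : ∃ i, b j ∈ f i := ⟨t + 1, hbT⟩
    set i := Nat.find hex with hi_def
    have hi : b j ∈ f i := Nat.find_spec hex
    have hile : i ≤ t + 1 := Nat.find_min' hex hbT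
    have hi1 : 1 ≤ i := by
      by_contra h
      have h0' : i = 0 := by omega
      rw [h0', h0] at hi
      have h1 : Even (2 * j.val + 1) := hi
      have h2 : Odd (2 * j.val + 1) := ⟨j.val, by ring⟩
      exact (Nat.not_odd_iff_even.mpr h1) h2
    have hprev : b j ∉ f (i - 1) := Nat.find_min hex (by omega)
    have ha_prev : a j ∈ f (i - 1) := by
      rcases hcov (i - 1) (by omega) (hadj j) with h | h
      · exact h
      · exact absurd h hprev
    have heq : i - 1 + 1 = i := by omega
    have hbd : b j ∈ symmDiff (f (i - 1)) (f (i - 1 + 1)) := by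
      rw [heq, Set.mem_symmDiff]
      exact Or.inr ⟨hi, hprev⟩
    have had : a j ∉ symmDiff (f (i - 1)) (f (i - 1 + 1)) := by
      intro hmem
      exact hind (i - 1) (by omega) hmem hbd (hadj j)
    have ha_i : a j ∈ f i := by
      by_contra hcon
      apply had
      rw [heq, Set.mem_symmDiff]
      exact Or.inl ⟨ha_prev, hcon⟩
    have hit : i ≤ t := by
      by_contra h
      have : i = t + 1 := by omega
      rw [this, hT] at ha_i
      have hodd : Odd (2 * j.val) := ha_i
      rw [Nat.odd_iff] at hodd
      omega
    exact ⟨i, hi1, hit, ha_i, hi⟩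
  choose g hg1 hg2 hg3 hg4 using key
  -- Step 2: pigeonhole over Icc 1 t
  have hmem : ∀ j : Fin n, j ∈ Finset.univ → g j ∈ Finset.Icc 1 t := fun j _ =>
    Finset.mem_Icc.mpr ⟨hg1 j, hg2 j⟩
  have hsum : (Finset.univ : Finset (Fin n)).card =
      ∑ i ∈ Finset.Icc 1 t, (Finset.univ.filter fun j => g j = i).card :=
    Finset.card_eq_sum_card_fiberwise hmem
  have hcardn : (Finset.univ : Finset (Fin n)).card = n := Finset.card_fin n
  have hpig : ∃ i ∈ Finset.Icc 1 t,
      n ≤ t * (Finset.univ.filter fun j => g j = i).card := by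
    by_contra h
    push_neg at h
    have hlt : ∀ i ∈ Finset.Icc 1 t,
        t * (Finset.univ.filter fun j => g j = i).card < n := h
    have hne : (Finset.Icc 1 t).Nonempty := ⟨1, Finset.mem_Icc.mpr ⟨le_refl 1, ht1⟩⟩
    have : ∑ i ∈ Finset.Icc 1 t, t * (Finset.univ.filter fun j => g j = i).card <
        ∑ _i ∈ Finset.Icc 1 t, n := Finset.sum_lt_sum_of_nonempty hne hlt
    rw [← Finset.mul_sum, ← hsum, hcardn, Finset.sum_const, Nat.card_Icc,
      Nat.add_sub_cancel, smul_eq_mul] at this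
    exact absurd this (lt_irrefl _)
  obtain ⟨i, hiI, hic⟩ := hpig
  obtain ⟨hi1, hit⟩ := Finset.mem_Icc.mp hiI
  refine ⟨i, by omega, ?_⟩
  -- Step 3: |f i| ≥ n + c where c = number of fully-contained pairs
  set c := (Finset.univ.filter fun j => g j = i).card with hc_def
  set F := (f i).toFinset with hF_def
  have hncard : (f i).ncard = F.card := Set.ncard_eq_toFinset_card' (f i)
  set p : Fin (2 * n) → Fin n := fun v => ⟨v.val / 2, by have := v.isLt; omega⟩ with hp_def
  have hFsum : F.card = ∑ j ∈ (Finset.univ : Finset (Fin n)),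
      (F.filter fun v => p v = j).card :=
    Finset.card_eq_sum_card_fiberwise (fun v _ => Finset.mem_univ _)
  have hpa : ∀ j : Fin n, p (a j) = j := fun j => by
    apply Fin.ext
    show 2 * j.val / 2 = j.val
    omega
  have hpb : ∀ j : Fin n, p (b j) = j := fun j => by
    apply Fin.ext
    show (2 * j.val + 1) / 2 = j.val
    omega
  have hfiber : ∀ j : Fin n, 1 + (if g j = i then 1 else 0) ≤
      (F.filter fun v => p v = j).card := by
    intro j
    by_cases hgj : g j = i
    · have ha' : a j ∈ F.filter fun v => p v = j := by
        rw [Finset.mem_filter]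
        exact ⟨Set.mem_toFinset.mpr (hgj ▸ hg3 j), hpa j⟩
      have hb' : b j ∈ F.filter fun v => p v = j := by
        rw [Finset.mem_filter]
        exact ⟨Set.mem_toFinset.mpr (hgj ▸ hg4 j), hpb j⟩
      have hab : a j ≠ b j := by
        intro h
        have := congrArg Fin.val h
        simp [a, b] at this
      have : ({a j, b j} : Finset (Fin (2 * n))) ⊆ F.filter fun v => p v = j := by
        intro x hx
        rcases Finset.mem_insert.mp hx with h | h
        · exact h ▸ ha'
        · exact (Finset.mem_singleton.mp h) ▸ hb'
      have h2 : ({a j, b j} : Finset (Fin (2 * n))).card = 2 :=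
        Finset.card_pair hab
      simp only [hgj, if_pos]
      calc 1 + 1 = 2 := rfl
        _ = ({a j, b j} : Finset (Fin (2 * n))).card := h2.symm
        _ ≤ _ := Finset.card_le_card this
    · simp only [hgj, if_neg, add_zero]
      rcases hcov i (by omega) (hadj j) with h | h
      · exact Finset.card_pos.mpr ⟨a j, Finset.mem_filter.mpr
          ⟨Set.mem_toFinset.mpr h, hpa j⟩⟩
      · exact Finset.card_pos.mpr ⟨b j, Finset.mem_filter.mpr
          ⟨Set.mem_toFinset.mpr h, hpb j⟩⟩
  have hlb : n + c ≤ F.card := by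
    rw [hFsum]
    calc n + c = ∑ j ∈ (Finset.univ : Finset (Fin n)),
        (1 + if g j = i then 1 else 0) := by
          rw [Finset.sum_add_distrib, Finset.sum_const, Finset.card_fin,
            smul_eq_mul, mul_one, hc_def, Finset.card_filter]
      _ ≤ _ := Finset.sum_le_sum fun j _ => hfiber j
  rw [hncard]
  calc n * (t + 1) = t * n + n := by ring
    _ ≤ t * n + t * c := by omega
    _ = t * (n + c) := by ring
    _ ≤ t * F.card := Nat.mul_le_mul_left t hlb
end

section
/- Let G be a graph with vertex covers α and β, and let A = α \ β, B = β \ α, X = α ∩ β. Write M' = max(|A|,|B|), m' = min(|A|,|B|) and suppose the induced graph G[A ∪ B] has h > 0 edges and arboricity λ. Then |X| + M' + m' − m'·M'/h + 1 ≤ (2 − 1/(2λ))·max(|α|,|β|) + 1. -/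
section
open SimpleGraph

private lemma dist_lt_of_mem_support {V : Type*} [DecidableEq V] {G : SimpleGraph V} {u r x : V}
    (p : G.Walk u r) (hp : p.length = G.dist u r) (hx : x ∈ p.support) (hxu : x ≠ u) :
    G.dist x r < G.dist u r := by
  have h1 := p.take_spec hx
  have h2 : (p.takeUntil x hx).length + (p.dropUntil x hx).length = p.length := by
    rw [← SimpleGraph.Walk.length_append, h1]
  have h3 : (p.takeUntil x hx).length ≠ 0 := fun h0 => hxu (SimpleGraph.Walk.eq_of_length_eq_zero h0).symm
  have h4 := G.dist_le (p.dropUntil x hx)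
  omega

private lemma acyclic_ncard_edge_le {V : Type*} [Fintype V] {G : SimpleGraph V}
    (hG : G.IsAcyclic) : G.edgeSet.ncard ≤ Fintype.card V := by
  classical
  set root : V → V := fun v => (G.connectedComponentMk v).out with hroot
  have hreach : ∀ v, G.Reachable v (root v) := fun v =>
    (ConnectedComponent.exact (Quot.out_eq _)).symm
  let d : V → ℕ := fun v => G.dist v (root v)
  have hd : ∀ v, d v = G.dist v (root v) := fun _ => rfl
  have hrooteq : ∀ {u v : V}, G.Reachable u v → root u = root v := by
    intro u v hvu
    simp only [hroot]
    rw [ConnectedComponent.sound hvu]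
  -- Lemma A : adjacent vertices have distinct d
  have lemA : ∀ {u v : V}, G.Adj u v → d u ≠ d v := by
    intro u v huv heq
    have hrv : root v = root u := hrooteq huv.reachable.symm
    rw [hd u, hd v, hrv] at heq
    obtain ⟨pu, hpu, hpul⟩ := (hreach u).exists_path_of_dist
    obtain ⟨pv, hpv, hpvl⟩ := (huv.symm.reachable.trans (hreach u)).exists_path_of_dist
    have hu_not : u ∉ pv.support := by
      intro hmem
      have := dist_lt_of_mem_support pv hpvl hmem huv.ne
      omega
    have hqpath : (SimpleGraph.Walk.cons huv pv).IsPath := hpv.cons hu_not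
    have hEq : (⟨_, hqpath⟩ : G.Path u (root u)) = ⟨pu, hpu⟩ := hG.path_unique _ _
    have hlen : (SimpleGraph.Walk.cons huv pv).length = pu.length :=
      congrArg (fun p : G.Path u (root u) => p.1.length) hEq
    simp only [SimpleGraph.Walk.length_cons] at hlen
    omega
  -- Lemma B : two distinct lower neighbors give two paths, contradiction
  have lemB : ∀ {u v w : V}, G.Adj w u → G.Adj w v → d u < d w → d v < d w → u = v := by
    intro u v w hwu hwv hu hv
    by_contra hne
    have hru : root u = root w := hrooteq hwu.reachable.symm
    have hrv : root v = root w := hrooteq hwv.reachable.symm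
    rw [hd u, hd w, hru] at hu
    rw [hd v, hd w, hrv] at hv
    obtain ⟨pu, hpu, hpul⟩ := (hwu.reachable.symm.trans (hreach w)).exists_path_of_dist
    obtain ⟨pv, hpv, hpvl⟩ := (hwv.reachable.symm.trans (hreach w)).exists_path_of_dist
    have hw_not_u : w ∉ pu.support := by
      intro hmem
      have h1 : G.dist w (root w) ≤ (pu.dropUntil w hmem).length := G.dist_le _
      have h2 := SimpleGraph.Walk.length_dropUntil_le pu hmem
      omega
    have hw_not_v : w ∉ pv.support := by
      intro hmem
      have h1 : G.dist w (root w) ≤ (pv.dropUntil w hmem).length := G.dist_le _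
      have h2 := SimpleGraph.Walk.length_dropUntil_le pv hmem
      omega
    have hq1 : (SimpleGraph.Walk.cons hwu pu).IsPath := hpu.cons hw_not_u
    have hq2 : (SimpleGraph.Walk.cons hwv pv).IsPath := hpv.cons hw_not_v
    have hEq : (⟨_, hq1⟩ : G.Path w (root w)) = ⟨_, hq2⟩ := hG.path_unique _ _
    have := congrArg (fun p : G.Path w (root w) => p.1.getVert 1) hEq
    simp only [SimpleGraph.Walk.getVert_cons_succ, SimpleGraph.Walk.getVert_zero] at this
    exact hne this
  -- the injection
  let n := Fintype.card V
  let idx : V → ℕ := fun v => (Fintype.equivFin V v : ℕ)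
  have idx_inj : Function.Injective idx := fun a b hab => by
    have := Fin.val_injective hab
    exact (Fintype.equivFin V).injective this
  let P : V → V → Prop := fun u v => d u < d v ∨ (d u = d v ∧ idx u ≤ idx v)
  have hsymm : ∀ (a b : V), (if P a b then b else a) = (if P b a then a else b) := by
    intro a b
    by_cases hab : P a b
    · by_cases hba : P b a
      · rw [if_pos hab, if_pos hba]
        rcases hab with h1 | ⟨h1, h2⟩ <;> rcases hba with h3 | ⟨h3, h4⟩
        · omega
        · omega
        · omega
        · exact (idx_inj (le_antisymm h2 h4)).symm
      · rw [if_pos hab, if_neg hba]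
    · by_cases hba : P b a
      · rw [if_neg hab, if_pos hba]
      · exfalso
        have hab' : ¬ (d a < d b ∨ (d a = d b ∧ idx a ≤ idx b)) := hab
        have hba' : ¬ (d b < d a ∨ (d b = d a ∧ idx b ≤ idx a)) := hba
        push_neg at hab' hba'
        obtain ⟨h1, h2⟩ := hab'
        obtain ⟨h3, h4⟩ := hba'
        have hdq : d a = d b := le_antisymm h3 h1
        have := h2 hdq
        have := h4 hdq.symm
        omega
  let f : Sym2 V → V := Sym2.lift ⟨fun u v => if P u v then v else u, hsymm⟩
  have fspec : ∀ {u v : V}, d u < d v → f s(u, v) = v := by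
    intro u v huv
    simp only [f, Sym2.lift_mk]
    rw [if_pos (Or.inl huv)]
  have key : ∀ e ∈ G.edgeSet, ∃ u, G.Adj u (f e) ∧ e = s(u, f e) ∧ d u < d (f e) := by
    intro e he
    induction e with
    | _ a b =>
      have hab : G.Adj a b := he
      rcases (lemA hab).lt_or_gt with hlt | hlt
      · exact ⟨a, by rwa [fspec hlt], by rw [fspec hlt], by rwa [fspec hlt]⟩
      · have hswap : s(a, b) = s(b, a) := Sym2.eq_swap
        rw [hswap]
        exact ⟨b, by rwa [fspec hlt, adj_comm], by rw [fspec hlt], by rwa [fspec hlt]⟩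
  have hinj : Set.InjOn f G.edgeSet := by
    intro e1 he1 e2 he2 hfe
    obtain ⟨u1, ha1, he1', hd1⟩ := key e1 he1
    obtain ⟨u2, ha2, he2', hd2⟩ := key e2 he2
    rw [hfe] at ha1 he1' hd1
    have : u1 = u2 := lemB ha1.symm ha2.symm hd1 hd2
    rw [he1', this]
    exact he2'.symm
  calc G.edgeSet.ncard ≤ (Set.univ : Set V).ncard :=
        Set.ncard_le_ncard_of_injOn f (fun e _ => Set.mem_univ _) hinj Set.finite_univ
    _ = Fintype.card V := by rw [Set.ncard_univ, Nat.card_eq_fintype_card]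

end

/-- `G` has arboricity at most `m`: its edge set can be covered by `m` forests. -/
def HasArboricityLE {V : Type*} (G : SimpleGraph V) (m : ℕ) : Prop :=
  ∃ F : Fin m → SimpleGraph V, (∀ i, F i ≤ G ∧ (F i).IsAcyclic) ∧
    ∀ e ∈ G.edgeSet, ∃ i, e ∈ (F i).edgeSet

/-- Cost bound for the greedy schedule: with `A = α \ β`, `B = β \ α`, `X = α ∩ β`,
`M' = max(|A|,|B|)`, `m' = min(|A|,|B|)`, if the graph induced on `α ⊕ β` has `h > 0` edges
and arboricity `λ`, then `|X| + M' + m' − m'·M'/h + 1 ≤ (2 − 1/(2λ))·max(|α|,|β|) + 1`. -/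
theorem greedy_cost_bound {V : Type*} [Fintype V] (G : SimpleGraph V) (α β : Set V)
    (hα : IsVertexCover G α) (hβ : IsVertexCover G β) (lam h : ℕ)
    (hh : h = (G.induce (symmDiff α β)).edgeSet.ncard) (hpos : 0 < h)
    (harb : HasArboricityLE (G.induce (symmDiff α β)) lam) :
    (((α ∩ β).ncard : ℝ) + (max ((α \ β).ncard) ((β \ α).ncard) : ℕ)
        + (min ((α \ β).ncard) ((β \ α).ncard) : ℕ)
        - ((min ((α \ β).ncard) ((β \ α).ncard) : ℕ) : ℝ)
          * ((max ((α \ β).ncard) ((β \ α).ncard) : ℕ) : ℝ) / h + 1)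
      ≤ (2 - 1 / (2 * (lam : ℝ))) * ((max α.ncard β.ncard : ℕ) : ℝ) + 1 := by
  classical
  set S : Set V := symmDiff α β with hS
  obtain ⟨F, hF, hcov⟩ := harb
  set a : ℕ := (α \ β).ncard with ha
  set b : ℕ := (β \ α).ncard with hb
  set x : ℕ := (α ∩ β).ncard with hx
  -- vertex count of the induced graph
  have hcard : Fintype.card ↥S = a + b := by
    have h1 : Fintype.card ↥S = S.ncard := by
      rw [Set.ncard_eq_toFinset_card', Set.toFinset_card]
    rw [h1, hS, Set.symmDiff_def]
    have hdisj : Disjoint (α \ β) (β \ α) := disjoint_sdiff_sdiff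
    rw [Set.ncard_union_eq hdisj (Set.toFinite _) (Set.toFinite _)]
  -- edge count bound
  have hedge : h ≤ lam * (a + b) := by
    have hsub : (G.induce S).edgeSet.toFinset ⊆
        Finset.univ.biUnion (fun i => (F i).edgeSet.toFinset) := by
      intro e he
      rw [Set.mem_toFinset] at he
      obtain ⟨i, hi⟩ := hcov e he
      exact Finset.mem_biUnion.mpr ⟨i, Finset.mem_univ _, Set.mem_toFinset.mpr hi⟩
    calc h = (G.induce S).edgeSet.toFinset.card := by
            rw [hh, Set.ncard_eq_toFinset_card']
      _ ≤ (Finset.univ.biUnion (fun i => (F i).edgeSet.toFinset)).card :=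
            Finset.card_le_card hsub
      _ ≤ ∑ i : Fin lam, (F i).edgeSet.toFinset.card := Finset.card_biUnion_le
      _ ≤ ∑ _i : Fin lam, (a + b) := by
            apply Finset.sum_le_sum
            intro i _
            rw [← Set.ncard_eq_toFinset_card', ← hcard]
            exact acyclic_ncard_edge_le (hF i).2
      _ = lam * (a + b) := by simp [Finset.sum_const, mul_comm]
  -- lam ≥ 1
  have hlam : 1 ≤ lam := by
    rcases Nat.eq_zero_or_pos lam with h0 | h1
    · exfalso
      subst h0
      rw [hh] at hpos
      obtain ⟨e, he⟩ := Set.nonempty_of_ncard_ne_zero hpos.ne'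
      obtain ⟨i, _⟩ := hcov e he
      exact i.elim0
    · exact h1
  -- abbreviations
  set M : ℕ := max a b with hM
  set m : ℕ := min a b with hm
  have hab : a + b = m + M := by
    rw [hm, hM]
    rcases le_total a b with hle | hle <;> simp [hle] <;> omega
  have hhM : h ≤ 2 * lam * M := by
    calc h ≤ lam * (a + b) := hedge
      _ = lam * (m + M) := by rw [hab]
      _ ≤ lam * (2 * M) := by
          apply Nat.mul_le_mul_left
          have : m ≤ M := min_le_max
          omega
      _ = 2 * lam * M := by ring
  have hM1 : 1 ≤ M := by
    by_contra hM0
    have : M = 0 := by omega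
    rw [this, Nat.mul_zero] at hhM
    omega
  -- max of covers
  have hmax : max α.ncard β.ncard = M + x := by
    have hA : α.ncard = a + x := by
      conv_lhs => rw [← Set.diff_union_inter α β]
      rw [Set.ncard_union_eq (Set.disjoint_left.mpr fun y hy hy2 => hy.2 hy2.2)
        (Set.toFinite _) (Set.toFinite _)]
    have hB : β.ncard = b + x := by
      conv_lhs => rw [← Set.diff_union_inter β α]
      rw [Set.ncard_union_eq (Set.disjoint_left.mpr fun y hy hy2 => hy.2 hy2.2)
        (Set.toFinite _) (Set.toFinite _), Set.inter_comm]
    rw [hA, hB, hM]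
    omega
  rw [hmax]
  -- real arithmetic
  have hmR : (m : ℝ) ≤ M := Nat.cast_le.mpr min_le_max
  have hm0 : (0 : ℝ) ≤ m := Nat.cast_nonneg _
  have hx0 : (0 : ℝ) ≤ x := Nat.cast_nonneg _
  have hM1R : (1 : ℝ) ≤ M := by exact_mod_cast hM1
  have hlamR : (1 : ℝ) ≤ lam := by exact_mod_cast hlam
  have hh1 : (1 : ℝ) ≤ h := by exact_mod_cast hpos
  have hhMR : (h : ℝ) ≤ 2 * lam * M := by exact_mod_cast hhM
  have hhpos : (0 : ℝ) < h := by linarith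
  have hlampos : (0 : ℝ) < 2 * lam := by linarith
  push_cast
  have h1 : (m : ℝ) / (2 * lam) ≤ m * M / h := by
    rw [div_le_div_iff₀ hlampos hhpos]
    nlinarith
  have hmMx : (m : ℝ) ≤ M + x := by linarith
  have hfac : (0 : ℝ) ≤ 1 - 1 / (2 * lam) := by
    have : 1 / (2 * (lam : ℝ)) ≤ 1 := by
      rw [div_le_one hlampos]; linarith
    linarith
  have key := mul_le_mul_of_nonneg_right hmMx hfac
  have hMx : ((M : ℝ) + x) / (2 * lam) = (M + x) * (1 / (2 * lam)) := by ring
  have hmdiv : (m : ℝ) * (1 - 1 / (2 * lam)) = m - m / (2 * lam) := by ring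
  have h2 : (x : ℝ) + M + m - m / (2 * lam) ≤ (2 - 1 / (2 * lam)) * (M + x) := by
    nlinarith [key]
  linarith [h1, h2]
end

section
/- Let G be a graph with disjoint sets A, B such that G[A ∪ B] is bipartite with parts A, B and has h > 0 edges. Order A by non-decreasing degree and let A_1 be the set of the ξ = ⌊|A||B|/(h+|A|)⌋ lowest-degree vertices of A, and B_1 = N(A_1) ∩ B. Then |B_1| ≤ ξh/|A|, and consequently max(|A| + |B_1|, |A| + |B| − ξ) ≤ |A| + |B| − |A||B|/(h+|A|) + 1. -/
open Finset

/-- Lowest-degree prefix bound for the 4-batch schedule: with `ξ = ⌊|A||B|/(h+|A|)⌋`,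
`A₁` the set of the `ξ` lowest-degree vertices of `A`, and `B₁ = N(A₁) ∩ B`, we have
`|B₁| ≤ ξh/|A|` and `max(|A| + |B₁|, |A| + |B| − ξ) ≤ |A| + |B| − |A||B|/(h+|A|) + 1`. -/
theorem four_batch_cost_bound {V : Type*} [Fintype V] (G : SimpleGraph V) (A B : Set V)
    (hdisj : Disjoint A B)
    (hbip : ∀ u ∈ A ∪ B, ∀ v ∈ A ∪ B, G.Adj u v → (u ∈ A ∧ v ∈ B) ∨ (u ∈ B ∧ v ∈ A))
    (h : ℕ) (hh : h = (G.induce (A ∪ B)).edgeSet.ncard) (hpos : 0 < h)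
    (A₁ : Set V) (hA₁ : A₁ ⊆ A)
    (hξ : A₁.ncard = A.ncard * B.ncard / (h + A.ncard))
    (hlow : ∀ u ∈ A₁, ∀ v ∈ A \ A₁,
      (G.neighborSet u ∩ B).ncard ≤ (G.neighborSet v ∩ B).ncard) :
    ((({b ∈ B | ∃ a ∈ A₁, G.Adj a b}).ncard : ℝ) ≤ (A₁.ncard : ℝ) * h / A.ncard) ∧
    max ((A.ncard : ℝ) + ({b ∈ B | ∃ a ∈ A₁, G.Adj a b}).ncard)
        ((A.ncard : ℝ) + B.ncard - (A.ncard * B.ncard / (h + A.ncard) : ℕ))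
      ≤ (A.ncard : ℝ) + B.ncard
          - (A.ncard : ℝ) * (B.ncard : ℝ) / ((h : ℝ) + A.ncard) + 1 := by
  classical
  have hAfin : A.Finite := Set.toFinite A
  have hBfin : B.Finite := Set.toFinite B
  have hA1fin : A₁.Finite := Set.toFinite A₁
  set Af := hAfin.toFinset with hAf
  set Bf := hBfin.toFinset with hBf
  set A1f := hA1fin.toFinset with hA1f
  set d : V → ℕ := fun a => (G.neighborSet a ∩ B).ncard with hdd
  -- degree as a filter card
  have hd : ∀ a : V, (Bf.filter (fun b => G.Adj a b)).card = d a := by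
    intro a
    show _ = (G.neighborSet a ∩ B).ncard
    rw [Set.ncard_eq_toFinset_card _ (Set.toFinite (G.neighborSet a ∩ B))]
    congr 1
    ext x
    simp only [hBf, Set.Finite.mem_toFinset, Finset.mem_filter]
    exact and_comm
  have hA1sub : A1f ⊆ Af := by
    intro x hx
    simp only [hAf, hA1f, Set.Finite.mem_toFinset] at *
    exact hA₁ hx
  -- double counting: total degree sum ≤ h
  set P : Finset (V × V) := (Af ×ˢ Bf).filter (fun p => G.Adj p.1 p.2) with hP
  have hPcard : P.card = ∑ a ∈ Af, d a := by
    rw [Finset.card_eq_sum_card_fiberwise (f := Prod.fst) (t := Af)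
      (fun p hp => by simp only [hP, Finset.mem_filter, Finset.mem_product] at hp; exact (Finset.mem_product.mp (Finset.mem_filter.mp hp).1).1)]
    refine Finset.sum_congr rfl fun a ha => ?_
    rw [← hd a]
    apply Finset.card_bij (fun p _ => p.2)
    · intro p hp
      simp only [hP, Finset.mem_filter, Finset.mem_product] at hp
      simp only [Finset.mem_filter]
      exact ⟨hp.1.1.2, hp.2 ▸ hp.1.2⟩
    · intro p hp q hq hpq
      simp only [hP, Finset.mem_filter, Finset.mem_product] at hp hq
      exact Prod.ext (hp.2.trans hq.2.symm) hpq
    · intro b hb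
      simp only [Finset.mem_filter] at hb
      exact ⟨(a, b), by simp [hP, Finset.mem_filter, Finset.mem_product, ha, hb.1, hb.2], rfl⟩
  set EAB : Set (Sym2 V) := {e | ∃ a ∈ A, ∃ b ∈ B, e = s(a, b) ∧ G.Adj a b} with hEAB
  have hPh : P.card ≤ h := by
    have h1 : P.card ≤ EAB.ncard := by
      rw [Set.ncard_eq_toFinset_card _ (Set.toFinite EAB)]
      apply Finset.card_le_card_of_injOn (fun p => s(p.1, p.2))
      · intro p hp
        simp only [hP, Finset.mem_coe, Finset.mem_filter, Finset.mem_product, hBf, hAf,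
          Set.Finite.mem_toFinset] at hp
        simp only [Set.Finite.mem_toFinset, hEAB, Set.mem_setOf_eq]
        exact (Set.Finite.mem_toFinset _).mpr ⟨p.1, hp.1.1, p.2, hp.1.2, rfl, hp.2⟩
      · intro p hp q hq hpq
        simp only [hP, Finset.mem_coe, Finset.mem_filter, Finset.mem_product, hBf, hAf,
          Set.Finite.mem_toFinset] at hp hq
        rw [Sym2.eq_iff] at hpq
        rcases hpq with ⟨h1, h2⟩ | ⟨h1, h2⟩
        · exact Prod.ext h1 h2
        · exact absurd (h1 ▸ hp.1.1) (Set.disjoint_left.mp hdisj.symm hq.1.2)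
    have h2 : EAB.ncard ≤ (G.induce (A ∪ B)).edgeSet.ncard := by
      have hsub : EAB ⊆ (Sym2.map (Subtype.val : ↥(A ∪ B) → V)) '' (G.induce (A ∪ B)).edgeSet := by
        rintro e ⟨a, ha, b, hb, rfl, hab⟩
        exact ⟨s((⟨a, Or.inl ha⟩ : ↥(A ∪ B)), (⟨b, Or.inr hb⟩ : ↥(A ∪ B))),
          by simpa using hab, rfl⟩
      exact (Set.ncard_le_ncard hsub (Set.toFinite _)).trans
        (Set.ncard_image_le (Set.toFinite _))
    exact h1.trans (le_of_le_of_eq h2 hh.symm)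
  have hsum : ∑ a ∈ Af, d a ≤ h := hPcard ▸ hPh
  -- averaging
  set s := ∑ a ∈ A1f, d a with hs
  set t := ∑ a ∈ Af \ A1f, d a with ht
  have hst : s + t = ∑ a ∈ Af, d a := by
    rw [hs, ht, ← Finset.sum_union (Finset.disjoint_sdiff)]
    congr 1
    rw [Finset.union_sdiff_of_subset hA1sub]
  have hkey : s * (Af \ A1f).card ≤ A1f.card * t := by
    calc s * (Af \ A1f).card = ∑ _v ∈ Af \ A1f, s := by
          rw [Finset.sum_const, smul_eq_mul, mul_comm]
      _ ≤ ∑ v ∈ Af \ A1f, A1f.card * d v := by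
          refine Finset.sum_le_sum fun v hv => ?_
          have hv' : v ∈ A \ A₁ := by
            simp only [Finset.mem_sdiff, hAf, hA1f, Set.Finite.mem_toFinset] at hv
            exact ⟨hv.1, hv.2⟩
          calc s = ∑ u ∈ A1f, d u := hs
            _ ≤ ∑ _u ∈ A1f, d v := by
                refine Finset.sum_le_sum fun u hu => ?_
                exact hlow u (by simpa [hA1f, Set.Finite.mem_toFinset] using hu) v hv'
            _ = A1f.card * d v := by rw [Finset.sum_const, smul_eq_mul]
      _ = A1f.card * t := by rw [ht, Finset.mul_sum]
  have hcards : A.ncard = Af.card := Set.ncard_eq_toFinset_card _ hAfin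
  have hcards1 : A₁.ncard = A1f.card := Set.ncard_eq_toFinset_card _ hA1fin
  have hcardsB : B.ncard = Bf.card := Set.ncard_eq_toFinset_card _ hBfin
  have hsdcard : (Af \ A1f).card = Af.card - A1f.card := Finset.card_sdiff_of_subset hA1sub
  have hξn : A1f.card ≤ Af.card := Finset.card_le_card hA1sub
  have hsn : s * Af.card ≤ h * A1f.card := by
    have h1 : s * Af.card = s * (Af \ A1f).card + s * A1f.card := by
      rw [hsdcard, ← Nat.mul_add, Nat.sub_add_cancel hξn]
    have h2 : s + t ≤ h := hst ▸ hsum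
    calc s * Af.card = s * (Af \ A1f).card + s * A1f.card := h1
      _ ≤ A1f.card * t + s * A1f.card := Nat.add_le_add_right hkey _
      _ = (s + t) * A1f.card := by ring
      _ ≤ h * A1f.card := Nat.mul_le_mul_right _ h2
  -- B₁ bound
  set B1 : Set V := {b ∈ B | ∃ a ∈ A₁, G.Adj a b} with hB1
  have hB1card : B1.ncard = (Bf.filter (fun b => ∃ a ∈ A₁, G.Adj a b)).card := by
    rw [Set.ncard_eq_toFinset_card _ (Set.toFinite B1)]
    congr 1
    ext x
    simp only [Set.Finite.mem_toFinset, Finset.mem_filter, hB1, Set.mem_setOf_eq, hBf]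
  have hB1s : B1.ncard ≤ s := by
    rw [hB1card]
    calc (Bf.filter (fun b => ∃ a ∈ A₁, G.Adj a b)).card
        ≤ (A1f.biUnion (fun a => Bf.filter (fun b => G.Adj a b))).card := by
          refine Finset.card_le_card fun b hb => ?_
          simp only [Finset.mem_filter] at hb
          obtain ⟨hbB, a, haA, hadj⟩ := hb
          refine Finset.mem_biUnion.mpr ⟨a, by simpa [hA1f, Set.Finite.mem_toFinset] using haA, ?_⟩
          exact Finset.mem_filter.mpr ⟨hbB, hadj⟩
      _ ≤ ∑ a ∈ A1f, (Bf.filter (fun b => G.Adj a b)).card := Finset.card_biUnion_le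
      _ = s := Finset.sum_congr rfl fun a _ => hd a
  -- so B1.ncard * n ≤ h * ξ
  have hmain : B1.ncard * A.ncard ≤ h * A₁.ncard := by
    rw [hcards, hcards1]
    exact le_trans (Nat.mul_le_mul_right _ hB1s) hsn
  -- part 1
  have part1 : ((B1.ncard : ℝ) ≤ (A₁.ncard : ℝ) * h / A.ncard) := by
    rcases Nat.eq_zero_or_pos A.ncard with hn0 | hnpos
    · have hAe : A = ∅ := (Set.ncard_eq_zero hAfin).mp hn0
      have hA1e : A₁ = ∅ := Set.subset_eq_empty hA₁ hAe
      have : B1 = ∅ := by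
        ext x; simp [hB1, hA1e]
      simp [this, hn0]
    · rw [le_div_iff₀ (by exact_mod_cast hnpos)]
      have := hmain
      push_cast
      nlinarith [hmain, (by exact_mod_cast hmain : (B1.ncard : ℝ) * A.ncard ≤ (h : ℝ) * A₁.ncard)]
  refine ⟨part1, ?_⟩
  -- part 2
  have hhn : (0 : ℝ) < (h : ℝ) + A.ncard := by positivity
  rw [max_le_iff]
  constructor
  · -- n + |B₁| ≤ n + m - nm/(h+n) + 1
    rcases Nat.eq_zero_or_pos A.ncard with hn0 | hnpos
    · have hAe : A = ∅ := (Set.ncard_eq_zero hAfin).mp hn0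
      have hA1e : A₁ = ∅ := Set.subset_eq_empty hA₁ hAe
      have hB1e : B1 = ∅ := by ext x; simp [hB1, hA1e]
      rw [hB1e]
      simp [hn0]
      positivity
    · have hnposR : (0 : ℝ) < A.ncard := by exact_mod_cast hnpos
      have f1 : (B1.ncard : ℝ) * A.ncard ≤ (h : ℝ) * A₁.ncard := by exact_mod_cast hmain
      have f2 : (A₁.ncard : ℝ) * ((h : ℝ) + A.ncard) ≤ (A.ncard : ℝ) * B.ncard := by
        have : A₁.ncard * (h + A.ncard) ≤ A.ncard * B.ncard := by
          rw [hξ]; exact Nat.div_mul_le_self _ _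
        exact_mod_cast this
      have key : (B1.ncard : ℝ) * ((h : ℝ) + A.ncard) ≤ (B.ncard : ℝ) * h := by
        have hk : (B1.ncard : ℝ) * ((h : ℝ) + A.ncard) * A.ncard ≤ (B.ncard : ℝ) * h * A.ncard := by
          nlinarith [f1, f2, hpos, (by positivity : (0:ℝ) ≤ (h:ℝ))]
        exact le_of_mul_le_mul_right hk hnposR
      have hdiv : (A.ncard : ℝ) * B.ncard / ((h : ℝ) + A.ncard) ≤ (B.ncard : ℝ) - B1.ncard := by
        rw [div_le_iff₀ hhn]
        nlinarith [key]
      linarith [hdiv]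
  · -- n + m - ξ ≤ n + m - nm/(h+n) + 1
    rw [← hξ]
    have hlt : A.ncard * B.ncard < (A₁.ncard + 1) * (h + A.ncard) := by
      rw [hξ]
      have h1 := Nat.div_add_mod (A.ncard * B.ncard) (h + A.ncard)
      have h2 : (A.ncard * B.ncard) % (h + A.ncard) < h + A.ncard :=
        Nat.mod_lt _ (by omega)
      calc A.ncard * B.ncard
          = (h + A.ncard) * (A.ncard * B.ncard / (h + A.ncard))
            + (A.ncard * B.ncard) % (h + A.ncard) := h1.symm
        _ < (h + A.ncard) * (A.ncard * B.ncard / (h + A.ncard)) + (h + A.ncard) :=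
            Nat.add_lt_add_left h2 _
        _ = (A.ncard * B.ncard / (h + A.ncard) + 1) * (h + A.ncard) := by ring
    have hltR : (A.ncard : ℝ) * B.ncard / ((h : ℝ) + A.ncard) < (A₁.ncard : ℝ) + 1 := by
      rw [div_lt_iff₀ hhn]
      exact_mod_cast hlt
    linarith
end

section
/- Let G = (A ∪ B, E) be a d-regular bipartite graph with |A| = |B| = n whose incidence matrix M satisfies: the second-largest eigenvalue δ_2 of M·Mᵀ is at most 4(d−1) (i.e., G is Ramanujan) and d ≥ 4. Suppose every subset S ⊆ A satisfies |N(S)| ≥ n(1 − (1 + (|S|/n)·d²/(4(d−1)))^{−1}). Then every vertex cover reconfiguration schedule from A to B contains an intermediate vertex cover of size at least n(2 − 4/(√(d+1)+1)). -/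
set_option maxHeartbeats 1000000 in
/-- In a `d`-regular bipartite (Ramanujan) graph with parts `A`, `B` of size `n`, `d ≥ 4`,
satisfying the vertex expansion bound `|N(S)| ≥ n(1 − (1 + (|S|/n)·d²/(4(d−1)))⁻¹)` for all
`S ⊆ A`, every vertex cover reconfiguration schedule from `A` to `B` has an intermediate
vertex cover of size at least `n(2 − 4/(√(d+1)+1))`. -/
theorem ramanujan_schedule_lower_bound {V : Type*} [Fintype V] (G : SimpleGraph V)
    (n d : ℕ) (hd : 4 ≤ d) (A B : Set V)
    (hdisj : Disjoint A B) (hcover : A ∪ B = Set.univ)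
    (hA : A.ncard = n) (hB : B.ncard = n)
    (hbip : ∀ u v : V, G.Adj u v → (u ∈ A ∧ v ∈ B) ∨ (u ∈ B ∧ v ∈ A))
    (hreg : ∀ v : V, (G.neighborSet v).ncard = d)
    (hexp : ∀ S ⊆ A, (({b ∈ B | ∃ a ∈ S, G.Adj a b}).ncard : ℝ) ≥
      (n : ℝ) * (1 - (1 + ((S.ncard : ℝ) / n) * (d : ℝ) ^ 2 / (4 * ((d : ℝ) - 1)))⁻¹))
    (ℓ : ℕ) (f : ℕ → Set V) (hf : IsVCSchedule G ℓ f A B) :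
    ∃ i ≤ ℓ, ((f i).ncard : ℝ) ≥ (n : ℝ) * (2 - 4 / (Real.sqrt ((d : ℝ) + 1) + 1)) := by
  classical
  obtain ⟨hf0, hfl, hcov, hind⟩ := hf
  rcases Nat.eq_zero_or_pos n with hn0 | hn0
  · refine ⟨0, Nat.zero_le _, ?_⟩
    subst hn0
    simp
  set s : ℝ := Real.sqrt ((d : ℝ) + 1) with hs
  have hd4 : (4 : ℝ) ≤ (d : ℝ) := by exact_mod_cast hd
  have hs0 : 0 ≤ s := Real.sqrt_nonneg _
  have hs2 : s ^ 2 = (d : ℝ) + 1 := Real.sq_sqrt (by positivity)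
  have hs1 : 1 ≤ s := by nlinarith
  set η : ℝ := 2 / (s + 1) with hη
  have hsp : (0 : ℝ) < s + 1 := by linarith
  have hηpos : 0 < η := by positivity
  have hηle1 : η ≤ 1 := by rw [hη, div_le_one hsp]; linarith
  have hnpos : (0 : ℝ) < n := by exact_mod_cast hn0
  have hex : ∃ j, j ≤ ℓ ∧ η * n ≤ ((A \ f j).ncard : ℝ) := by
    refine ⟨ℓ, le_rfl, ?_⟩
    rw [hfl, hdisj.sdiff_eq_left, hA]
    nlinarith
  have hspec1 : Nat.find hex ≤ ℓ := (Nat.find_spec hex).1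
  have hSi : η * n ≤ ((A \ f (Nat.find hex)).ncard : ℝ) := (Nat.find_spec hex).2
  have hi0 : Nat.find hex ≠ 0 := by
    intro h
    rw [h, hf0, Set.diff_self] at hSi
    simp only [Set.ncard_empty, Nat.cast_zero] at hSi
    nlinarith
  obtain ⟨j, hij⟩ : ∃ j, Nat.find hex = j + 1 := ⟨Nat.find hex - 1, by omega⟩
  rw [hij] at hspec1 hSi
  have hjℓ : j ≤ ℓ := by omega
  have hjlt : j < ℓ := by omega
  have hjmin := Nat.find_min hex (show j < Nat.find hex by omega)
  have hAfj : (((A \ f j).ncard : ℕ) : ℝ) < η * n := by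
    by_contra h
    push_neg at h
    exact hjmin ⟨hjℓ, h⟩
  set S : Set V := A \ f (j + 1) with hSdef
  set NB : Set V := {b ∈ B | ∃ a ∈ S, G.Adj a b} with hNBdef
  -- N(S) ⊆ f j
  have hNsub : NB ⊆ f j := by
    rintro b ⟨hbB, a, haS, hadj⟩
    have haA : a ∈ A := haS.1
    have hanotfi : a ∉ f (j + 1) := haS.2
    have hbfi : b ∈ f (j + 1) := by
      rcases hcov (j + 1) (by omega) hadj with h | h
      · exact absurd h hanotfi
      · exact h
    by_contra hbfj
    have hafj : a ∈ f j := by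
      by_contra h
      rcases hcov j hjℓ hadj with h' | h'
      · exact h h'
      · exact hbfj h'
    exact hind j hjlt (Set.mem_symmDiff.mpr (Or.inl ⟨hafj, hanotfi⟩))
      (Set.mem_symmDiff.mpr (Or.inr ⟨hbfi, hbfj⟩)) hadj
  have hNB_B : NB ⊆ B := fun b hb => hb.1
  have hdisj2 : Disjoint (A ∩ f j) NB :=
    Set.disjoint_of_subset Set.inter_subset_left hNB_B hdisj
  have hunion : ((A ∩ f j) ∪ NB).ncard = (A ∩ f j).ncard + NB.ncard :=
    Set.ncard_union_eq hdisj2 (Set.toFinite _) (Set.toFinite _)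
  have hle : ((A ∩ f j) ∪ NB).ncard ≤ (f j).ncard :=
    Set.ncard_le_ncard (Set.union_subset Set.inter_subset_right hNsub) (Set.toFinite _)
  have hsplit : (A ∩ f j).ncard + (A \ f j).ncard = n := by
    rw [← hA]
    exact Set.ncard_inter_add_ncard_diff_eq_ncard A (f j) (Set.toFinite _)
  -- real arithmetic
  set c : ℝ := (d : ℝ) ^ 2 / (4 * ((d : ℝ) - 1)) with hc
  have hdm1 : (0 : ℝ) < (d : ℝ) - 1 := by linarith
  have hcpos : 0 < c := div_pos (by positivity) (by linarith)
  have hcge : (d : ℝ) / 4 ≤ c := by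
    rw [hc, div_le_div_iff₀ (by norm_num) (by linarith)]
    nlinarith
  have keyeq : η + ((d : ℝ) / 4) * η ^ 2 = 1 := by
    have hd_eq : (d : ℝ) = s ^ 2 - 1 := by linarith
    rw [hη, hd_eq]
    have hne : s + 1 ≠ 0 := ne_of_gt hsp
    field_simp
    ring
  have h1 : (0 : ℝ) < 1 + η * c := by positivity
  have h2 : 1 ≤ η * (1 + η * c) := by nlinarith [mul_le_mul_of_nonneg_left hcge (sq_nonneg η)]
  have hinv : (1 + η * c)⁻¹ ≤ η := by
    rw [← one_div, div_le_iff₀ h1]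
    exact h2
  -- expansion bound
  have hexpS := hexp S Set.diff_subset
  have hx : η ≤ ((S.ncard : ℝ) / n) := (le_div_iff₀ hnpos).mpr hSi
  have hmon : (1 + ((S.ncard : ℝ) / n) * (d : ℝ) ^ 2 / (4 * ((d : ℝ) - 1)))⁻¹ ≤ η := by
    have e1 : ((S.ncard : ℝ) / n) * (d : ℝ) ^ 2 / (4 * ((d : ℝ) - 1)) = ((S.ncard : ℝ) / n) * c := by
      rw [hc]; ring
    rw [e1]
    have hmul : η * c ≤ ((S.ncard : ℝ) / n) * c := mul_le_mul_of_nonneg_right hx hcpos.le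
    have hle2 : 1 + η * c ≤ 1 + ((S.ncard : ℝ) / n) * c := by linarith
    have := inv_anti₀ h1 hle2
    linarith [hinv]
  have hNBcard : (NB.ncard : ℝ) ≥ (n : ℝ) * (1 - η) := by
    refine le_trans ?_ hexpS
    apply mul_le_mul_of_nonneg_left _ hnpos.le
    linarith [hmon]
  refine ⟨j, hjℓ, ?_⟩
  have hcast1 : ((A ∩ f j).ncard : ℝ) + ((A \ f j).ncard : ℝ) = n := by exact_mod_cast hsplit
  have hcast2 : ((A ∩ f j).ncard : ℝ) + (NB.ncard : ℝ) ≤ ((f j).ncard : ℝ) := by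
    exact_mod_cast hunion ▸ hle
  have hfinal : (2 : ℝ) - 4 / (s + 1) = 2 - 2 * η := by rw [hη]; ring
  rw [hfinal]
  nlinarith [hcast1, hcast2, hNBcard, hAfj]
end

section
/- Let G be a graph with vertex covers α, β and let D = α ⊕ β. Suppose C_1, …, C_k, S is a partition of V such that there is no edge between C_i \ Z and C_j \ Z for i ≠ j, where Z = V \ D. If each induced graph G[C_i] admits a monotone reconfiguration schedule from α ∩ C_i to β ∩ C_i whose intermediate covers (within C_i) have size at most η·max(|α ∩ C_i|, |β ∩ C_i|) + c, then G admits a reconfiguration schedule from α to β whose intermediate vertex covers have size at most η·max(|α|,|β|) + |S| + k·c. -/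
lemma indepSet_mono {V : Type*} {G : SimpleGraph V} {s t : Set V} (h : s ⊆ t)
    (ht : IsIndepSet G t) : IsIndepSet G s := fun _ _ hu hv => ht (h hu) (h hv)

lemma exists_crossing {P : ℕ → Prop} (h0 : P 0) :
    ∀ {j : ℕ}, ¬ P j → ∃ a, a < j ∧ P a ∧ ¬ P (a + 1) := by
  intro j
  induction j with
  | zero => exact fun h => absurd h0 h
  | succ m ih =>
    intro h
    by_cases hm : P m
    · exact ⟨m, Nat.lt_succ_self m, hm, h⟩
    · obtain ⟨a, ha, h1, h2⟩ := ih hm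
      exact ⟨a, ha.trans (Nat.lt_succ_self m), h1, h2⟩

lemma ncard_biUnion_le' {V : Type*} [Fintype V] {ι : Type*} [DecidableEq ι]
    (t : Finset ι) (F : ι → Set V) :
    (⋃ i ∈ t, F i).ncard ≤ ∑ i ∈ t, (F i).ncard := by
  induction t using Finset.induction_on with
  | empty => simp
  | @insert a s h ih =>
    rw [Finset.set_biUnion_insert, Finset.sum_insert h]
    exact le_trans (Set.ncard_union_le _ _) (by omega)

lemma ncard_fin_iUnion_le {V : Type*} [Fintype V] {k : ℕ} (F : Fin k → Set V) :
    (⋃ i, F i).ncard ≤ ∑ i : Fin k, (F i).ncard := by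
  classical
  have h : (⋃ i, F i) = ⋃ i ∈ (Finset.univ : Finset (Fin k)), F i := by simp
  rw [h]
  exact ncard_biUnion_le' _ _

lemma sum_ncard_inter_le {V : Type*} [Fintype V] {k : ℕ} (γ : Set V) (C : Fin k → Set V)
    (hdisj : ∀ i j, i ≠ j → Disjoint (C i) (C j)) :
    ∑ i : Fin k, (γ ∩ C i).ncard ≤ γ.ncard := by
  classical
  have key : ∀ t : Finset (Fin k), ∑ i ∈ t, (γ ∩ C i).ncard = (⋃ i ∈ t, γ ∩ C i).ncard := by
    intro t
    induction t using Finset.induction_on with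
    | empty => simp
    | @insert a s h ih =>
      rw [Finset.set_biUnion_insert, Finset.sum_insert h, ih,
        Set.ncard_union_eq]
      simp only [Set.disjoint_iUnion_right]
      intro i hi
      exact ((hdisj a i (fun he => h (he ▸ hi))).mono
        Set.inter_subset_right Set.inter_subset_right)
  have h2 : (⋃ i ∈ (Finset.univ : Finset (Fin k)), γ ∩ C i) ⊆ γ := by
    intro v hv
    simp only [Set.mem_iUnion] at hv
    obtain ⟨i, _, hv, _⟩ := hv
    exact hv
  calc ∑ i : Fin k, (γ ∩ C i).ncard = (⋃ i ∈ (Finset.univ : Finset (Fin k)), γ ∩ C i).ncard :=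
        key _
    _ ≤ γ.ncard := Set.ncard_le_ncard h2


set_option maxHeartbeats 3200000

/-- Decomposition-to-schedule lemma: given a partition of `V` into clusters `C 1, …, C k`
and a separator set `S` such that no edge joins `C i \ Z` and `C j \ Z` for `i ≠ j`,
where `Z = V \ (α ⊕ β)`, if each cluster admits a monotone length-`ℓ` reconfiguration
schedule from `α ∩ C i` to `β ∩ C i` (covering all edges inside `C i`) whose intermediate
covers have size at most `η·max(|α ∩ C i|, |β ∩ C i|) + c`, then `G` admits a
reconfiguration schedule from `α` to `β` whose intermediate vertex covers have size at most
`η·max(|α|,|β|) + |S| + k·c`. -/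
theorem decomposition_to_schedule {V : Type*} [Fintype V] (G : SimpleGraph V)
    (α β : Set V) (hα : IsVertexCover G α) (hβ : IsVertexCover G β)
    (η c : ℝ) (hη1 : 1 ≤ η) (hη2 : η ≤ 2) (hc : 0 ≤ c)
    (k : ℕ) (C : Fin k → Set V) (S : Set V)
    (hdisj : ∀ i j, i ≠ j → Disjoint (C i) (C j))
    (hdisjS : ∀ i, Disjoint (C i) S)
    (hcover : S ∪ ⋃ i, C i = Set.univ)
    (hsep : ∀ i j, i ≠ j → ∀ u ∈ C i ∩ symmDiff α β, ∀ v ∈ C j ∩ symmDiff α β,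
      ¬ G.Adj u v)
    (ℓ : ℕ)
    (hsched : ∀ i, ∃ f : ℕ → Set V,
      (∀ j ≤ ℓ, f j ⊆ C i) ∧ f 0 = α ∩ C i ∧ f ℓ = β ∩ C i ∧
      (∀ j ≤ ℓ, ∀ u ∈ C i, ∀ v ∈ C i, G.Adj u v → u ∈ f j ∨ v ∈ f j) ∧
      (∀ j < ℓ, IsIndepSet G (symmDiff (f j) (f (j + 1)))) ∧
      (∀ v : V, ∀ j₁ j₂, j₁ < ℓ → j₂ < ℓ → v ∈ symmDiff (f j₁) (f (j₁ + 1)) →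
        v ∈ symmDiff (f j₂) (f (j₂ + 1)) → j₁ = j₂) ∧
      (∀ j ≤ ℓ, ((f j).ncard : ℝ) ≤
        η * (max ((α ∩ C i).ncard) ((β ∩ C i).ncard) : ℕ) + c)) :
    ∃ (ℓ' : ℕ) (g : ℕ → Set V), IsVCSchedule G ℓ' g α β ∧
      ∀ j ≤ ℓ', ((g j).ncard : ℝ) ≤
        η * (max α.ncard β.ncard : ℕ) + S.ncard + k * c := by
  classical
  choose f hfsub hf0 hfl hfcov hfind hfmono hfcard using hsched
  -- location of vertices
  have loc : ∀ v : V, v ∈ S ∨ ∃ i, v ∈ C i := by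
    intro v
    have hv : v ∈ S ∪ ⋃ i, C i := hcover ▸ Set.mem_univ v
    rcases hv with h | h
    · exact Or.inl h
    · exact Or.inr (Set.mem_iUnion.mp h)
  -- persistence of α ∩ β vertices
  have hper : ∀ (i : Fin k) (v : V), v ∈ α → v ∈ β → v ∈ C i → ∀ j, j ≤ ℓ → v ∈ f i j := by
    intro i v hvα hvβ hvC j hj
    by_contra hv
    have hv0 : v ∈ f i 0 := by rw [hf0 i]; exact ⟨hvα, hvC⟩
    have hvl : v ∈ f i ℓ := by rw [hfl i]; exact ⟨hvβ, hvC⟩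
    have hjl : j < ℓ := lt_of_le_of_ne hj (by rintro rfl; exact hv hvl)
    obtain ⟨a, ha, ha1, ha2⟩ := exists_crossing (P := fun t => v ∈ f i t) hv0 hv
    have hnotend : ¬ ¬ v ∈ f i (j + (ℓ - j)) := by
      rw [Nat.add_sub_cancel' hj]
      exact fun h => h hvl
    obtain ⟨b, hb, hb1, hb2⟩ := exists_crossing (P := fun t => ¬ v ∈ f i (j + t)) hv hnotend
    rw [not_not] at hb2
    have hmema : v ∈ symmDiff (f i a) (f i (a + 1)) :=
      Set.mem_symmDiff.mpr (Or.inl ⟨ha1, ha2⟩)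
    have hmemb : v ∈ symmDiff (f i (j + b)) (f i ((j + b) + 1)) := by
      refine Set.mem_symmDiff.mpr (Or.inr ⟨?_, hb1⟩)
      have : j + (b + 1) = (j + b) + 1 := by omega
      rwa [this] at hb2
    have heq := hfmono i v a (j + b) (by omega) (by omega) hmema hmemb
    omega
  -- ordering of clusters
  set key : Fin k → ℕ := fun i => if (β ∩ C i).ncard ≤ (α ∩ C i).ncard then 0 else 1 with hkeydef
  set n : Fin k → ℕ := fun i => key i * k + i.val with hndef
  have hkeylt : ∀ i j : Fin k, key i < key j → n i < n j := by
    intro i j h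
    have h1 : n i < (key i + 1) * k := by
      simp only [hndef, add_mul, one_mul]
      have := i.isLt
      omega
    have h2 : (key i + 1) * k ≤ key j * k := Nat.mul_le_mul_right k h
    have h3 : key j * k ≤ n j := Nat.le_add_right _ _
    omega
  have hninj : Function.Injective n := by
    intro i j hij
    rcases lt_trichotomy (key i) (key j) with h | h | h
    · exact absurd hij (Nat.ne_of_lt (hkeylt i j h))
    · simp only [hndef, h] at hij
      exact Fin.ext (by omega)
    · exact absurd hij.symm (Nat.ne_of_lt (hkeylt j i h))
  set r : Fin k → ℕ := fun i => (Finset.univ.filter (fun j => n j < n i)).card with hrdef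
  have hrmono : ∀ i j : Fin k, n i < n j → r i < r j := by
    intro i j h
    apply Finset.card_lt_card
    rw [Finset.ssubset_iff_of_subset]
    · exact ⟨i, Finset.mem_filter.mpr ⟨Finset.mem_univ i, h⟩, by simp⟩
    · intro x hx
      simp only [Finset.mem_filter, Finset.mem_univ, true_and] at hx ⊢
      exact hx.trans h
  have hrlt : ∀ i, r i < k := by
    intro i
    have h1 : (Finset.univ.filter (fun j => n j < n i)) ⊂ Finset.univ := by
      rw [Finset.ssubset_iff_of_subset (Finset.subset_univ _)]
      exact ⟨i, Finset.mem_univ i, by simp⟩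
    have := Finset.card_lt_card h1
    simpa using this
  have hrinj : ∀ i j : Fin k, r i = r j → i = j := by
    intro i j h
    rcases lt_trichotomy (n i) (n j) with hh | hh | hh
    · exact absurd h (Nat.ne_of_lt (hrmono _ _ hh))
    · exact hninj hh
    · exact absurd h.symm (Nat.ne_of_lt (hrmono _ _ hh))
  have hrkey : ∀ i j : Fin k, r i < r j → key i ≤ key j := by
    intro i j h
    by_contra hk
    push_neg at hk
    have := hrmono _ _ (hkeylt _ _ hk)
    omega
  have hrsurj : ∀ q, q < k → ∃ i, r i = q := by
    intro q hq
    have hsurj : Function.Surjective (fun i : Fin k => (⟨r i, hrlt i⟩ : Fin k)) := by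
      apply Finite.surjective_of_injective
      intro i j hij
      exact hrinj i j (by simpa using congrArg Fin.val hij)
    obtain ⟨i, hi⟩ := hsurj ⟨q, hq⟩
    exact ⟨i, by simpa using congrArg Fin.val hi⟩
  -- the middle schedule
  set T : Fin k → ℕ → ℕ := fun i s => min ℓ (s - r i * ℓ) with hTdef
  set M : ℕ → Set V := fun s => (S ∩ (α ∪ β)) ∪ ⋃ i, f i (T i s) with hMdef
  have hTle : ∀ i s, T i s ≤ ℓ := fun i s => min_le_left _ _
  have hM0 : M 0 = α ∪ (S ∩ β) := by
    have hT0 : ∀ i, T i 0 = 0 := by intro i; simp [hTdef]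
    ext v
    simp only [hMdef, Set.mem_union, Set.mem_inter_iff, Set.mem_iUnion]
    constructor
    · rintro (⟨hvS, hv⟩ | ⟨i, hv⟩)
      · rcases hv with h | h
        · exact Or.inl h
        · exact Or.inr ⟨hvS, h⟩
      · rw [hT0 i, hf0 i] at hv
        exact Or.inl hv.1
    · rintro (hv | ⟨hvS, hvβ⟩)
      · rcases loc v with h | ⟨i, h⟩
        · exact Or.inl ⟨h, Or.inl hv⟩
        · exact Or.inr ⟨i, by rw [hT0 i, hf0 i]; exact ⟨hv, h⟩⟩
      · exact Or.inl ⟨hvS, Or.inr hvβ⟩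
  have hMend : M (k * ℓ) = β ∪ (S ∩ α) := by
    have hTl : ∀ i, T i (k * ℓ) = ℓ := by
      intro i
      have h1 : r i * ℓ + ℓ ≤ k * ℓ := by
        have := Nat.mul_le_mul_right ℓ (show r i + 1 ≤ k from hrlt i)
        rw [add_mul, one_mul] at this
        exact this
      simp only [hTdef]
      omega
    ext v
    simp only [hMdef, Set.mem_union, Set.mem_inter_iff, Set.mem_iUnion]
    constructor
    · rintro (⟨hvS, hv⟩ | ⟨i, hv⟩)
      · rcases hv with h | h
        · exact Or.inr ⟨hvS, h⟩
        · exact Or.inl h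
      · rw [hTl i, hfl i] at hv
        exact Or.inl hv.1
    · rintro (hv | ⟨hvS, hvα⟩)
      · rcases loc v with h | ⟨i, h⟩
        · exact Or.inl ⟨h, Or.inr hv⟩
        · exact Or.inr ⟨i, by rw [hTl i, hfl i]; exact ⟨hv, h⟩⟩
      · exact Or.inl ⟨hvS, Or.inl hvα⟩
  -- M s is a vertex cover
  have hmemαβ : ∀ s v, v ∈ α → v ∈ β → v ∈ M s := by
    intro s v hvα hvβ
    rcases loc v with h | ⟨i, h⟩
    · exact Or.inl ⟨h, Or.inl hvα⟩
    · exact Or.inr (Set.mem_iUnion.mpr ⟨i, hper i v hvα hvβ h _ (hTle i s)⟩)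
  have hMcov : ∀ s, IsVertexCover G (M s) := by
    intro s u v huv
    by_cases huαβ : u ∈ α ∧ u ∈ β
    · exact Or.inl (hmemαβ s u huαβ.1 huαβ.2)
    by_cases hvαβ : v ∈ α ∧ v ∈ β
    · exact Or.inr (hmemαβ s v hvαβ.1 hvαβ.2)
    have h1 := hα huv
    have h2 := hβ huv
    have huD : u ∈ symmDiff α β := by
      rw [Set.mem_symmDiff]
      by_cases huα : u ∈ α
      · exact Or.inl ⟨huα, fun hb => huαβ ⟨huα, hb⟩⟩
      · have hvα : v ∈ α := h1.resolve_left huα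
        have huβ : u ∈ β := h2.resolve_right (fun hb => hvαβ ⟨hvα, hb⟩)
        exact Or.inr ⟨huβ, huα⟩
    have hvD : v ∈ symmDiff α β := by
      rw [Set.mem_symmDiff]
      by_cases hvα : v ∈ α
      · exact Or.inl ⟨hvα, fun hb => hvαβ ⟨hvα, hb⟩⟩
      · have huα : u ∈ α := h1.resolve_right hvα
        have hvβ : v ∈ β := h2.resolve_left (fun hb => huαβ ⟨huα, hb⟩)
        exact Or.inr ⟨hvβ, hvα⟩
    have huab : u ∈ α ∪ β := by
      rcases Set.mem_symmDiff.mp huD with h | h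
      · exact Or.inl h.1
      · exact Or.inr h.1
    have hvab : v ∈ α ∪ β := by
      rcases Set.mem_symmDiff.mp hvD with h | h
      · exact Or.inl h.1
      · exact Or.inr h.1
    rcases loc u with hu | ⟨i, hui⟩
    · exact Or.inl (Or.inl ⟨hu, huab⟩)
    rcases loc v with hv | ⟨j, hvj⟩
    · exact Or.inr (Or.inl ⟨hv, hvab⟩)
    by_cases hij : i = j
    · subst hij
      rcases hfcov i (T i s) (hTle i s) u hui v hvj huv with h | h
      · exact Or.inl (Or.inr (Set.mem_iUnion.mpr ⟨i, h⟩))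
      · exact Or.inr (Or.inr (Set.mem_iUnion.mpr ⟨i, h⟩))
    · exact absurd huv (hsep i j hij u ⟨hui, huD⟩ v ⟨hvj, hvD⟩)
  -- steps of M are independent
  have hstep : ∀ s, s < k * ℓ → IsIndepSet G (symmDiff (M s) (M (s + 1))) := by
    intro s hs
    have hℓ : 0 < ℓ := by
      rcases Nat.eq_zero_or_pos ℓ with h | h
      · rw [h, Nat.mul_zero] at hs; omega
      · exact h
    set q := s / ℓ with hqdef
    have h1 : q * ℓ ≤ s := Nat.div_mul_le_self s ℓ
    have h2 : s < q * ℓ + ℓ := by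
      have := (Nat.div_lt_iff_lt_mul hℓ).mp (show s / ℓ < q + 1 by omega)
      rw [add_mul, one_mul] at this
      exact this
    have hqk : q < k := by
      rw [hqdef, Nat.div_lt_iff_lt_mul hℓ]
      exact hs
    obtain ⟨i₀, hi₀⟩ := hrsurj q hqk
    have ha : s - q * ℓ < ℓ := by omega
    have hTi₀s : T i₀ s = s - q * ℓ := by
      simp only [hTdef, hi₀]
      omega
    have hTi₀s1 : T i₀ (s + 1) = (s - q * ℓ) + 1 := by
      simp only [hTdef, hi₀]
      omega
    have hTfix : ∀ i : Fin k, i ≠ i₀ → T i s = T i (s + 1) := by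
      intro i hine
      have hrne : r i ≠ q := fun h => hine (hrinj i i₀ (h.trans hi₀.symm))
      rcases Nat.lt_or_ge (r i) q with h | h
      · have hle : r i * ℓ + ℓ ≤ s := by
          have := Nat.mul_le_mul_right ℓ (show r i + 1 ≤ q from h)
          rw [add_mul, one_mul] at this
          omega
        simp only [hTdef]
        omega
      · have h' : q + 1 ≤ r i := by omega
        have hge : q * ℓ + ℓ ≤ r i * ℓ := by
          have := Nat.mul_le_mul_right ℓ h'
          rw [add_mul, one_mul] at this
          omega
        simp only [hTdef]
        omega
    apply indepSet_mono _ (hfind i₀ (s - q * ℓ) ha)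
    intro v hv
    rw [Set.mem_symmDiff] at hv ⊢
    have hSpart : ∀ t : ℕ, v ∈ S ∩ (α ∪ β) → v ∈ M t := fun t h => Or.inl h
    rcases hv with ⟨hv1, hv2⟩ | ⟨hv1, hv2⟩
    · rcases hv1 with h | h
      · exact absurd (hSpart _ h) hv2
      · obtain ⟨i, hi⟩ := Set.mem_iUnion.mp h
        by_cases hii : i = i₀
        · subst hii
          rw [hTi₀s] at hi
          refine Or.inl ⟨hi, fun hcon => hv2 ?_⟩
          rw [← hTi₀s1] at hcon
          exact Or.inr (Set.mem_iUnion.mpr ⟨i, hcon⟩)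
        · rw [hTfix i hii] at hi
          exact absurd (Or.inr (Set.mem_iUnion.mpr ⟨i, hi⟩)) hv2
    · rcases hv1 with h | h
      · exact absurd (hSpart _ h) hv2
      · obtain ⟨i, hi⟩ := Set.mem_iUnion.mp h
        by_cases hii : i = i₀
        · subst hii
          rw [hTi₀s1] at hi
          refine Or.inr ⟨hi, fun hcon => hv2 ?_⟩
          rw [← hTi₀s] at hcon
          exact Or.inr (Set.mem_iUnion.mpr ⟨i, hcon⟩)
        · rw [← hTfix i hii] at hi
          exact absurd (Or.inr (Set.mem_iUnion.mpr ⟨i, hi⟩)) hv2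
  -- cardinality bound
  have hmaxα : (α.ncard : ℝ) ≤ ((max α.ncard β.ncard : ℕ) : ℝ) := by
    exact_mod_cast le_max_left _ _
  have hmaxβ : (β.ncard : ℝ) ≤ ((max α.ncard β.ncard : ℕ) : ℝ) := by
    exact_mod_cast le_max_right _ _
  have hmax0 : (0 : ℝ) ≤ ((max α.ncard β.ncard : ℕ) : ℝ) := Nat.cast_nonneg _
  have hkc0 : (0 : ℝ) ≤ (k : ℝ) * c := mul_nonneg (Nat.cast_nonneg _) hc
  have hS0 : (0 : ℝ) ≤ (S.ncard : ℝ) := Nat.cast_nonneg _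
  have hMcard : ∀ s, s ≤ k * ℓ → ((M s).ncard : ℝ) ≤
      η * ((max α.ncard β.ncard : ℕ) : ℝ) + (S.ncard : ℝ) + (k : ℝ) * c := by
    intro s hs
    rcases eq_or_lt_of_le hs with heq | hlt
    · rw [heq, hMend]
      have h1 : (β ∪ S ∩ α).ncard ≤ β.ncard + S.ncard := by
        refine le_trans (Set.ncard_union_le _ _) ?_
        have := Set.ncard_le_ncard (Set.inter_subset_left : S ∩ α ⊆ S) S.toFinite
        omega
      have h2 : ((β ∪ S ∩ α).ncard : ℝ) ≤ (β.ncard : ℝ) + (S.ncard : ℝ) := by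
        exact_mod_cast h1
      nlinarith
    · -- s < k * ℓ
      have hℓ : 0 < ℓ := by
        rcases Nat.eq_zero_or_pos ℓ with h | h
        · rw [h, Nat.mul_zero] at hlt; omega
        · exact h
      set q := s / ℓ with hqdef
      have h1 : q * ℓ ≤ s := Nat.div_mul_le_self s ℓ
      have h2 : s < q * ℓ + ℓ := by
        have := (Nat.div_lt_iff_lt_mul hℓ).mp (show s / ℓ < q + 1 by omega)
        rw [add_mul, one_mul] at this
        exact this
      have hqk : q < k := by
        rw [hqdef, Nat.div_lt_iff_lt_mul hℓ]
        exact hlt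
      obtain ⟨i₀, hi₀⟩ := hrsurj q hqk
      have hk1 : (1 : ℝ) ≤ (k : ℝ) := by
        have : 0 < k := by omega
        exact_mod_cast this
      -- basic union bound
      have hub : ((M s).ncard : ℝ) ≤ (S.ncard : ℝ) + ∑ i : Fin k, ((f i (T i s)).ncard : ℝ) := by
        have hA : (M s).ncard ≤ (S ∩ (α ∪ β)).ncard + (⋃ i, f i (T i s)).ncard :=
          Set.ncard_union_le _ _
        have hB : (⋃ i, f i (T i s)).ncard ≤ ∑ i : Fin k, (f i (T i s)).ncard :=
          ncard_fin_iUnion_le _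
        have hC : (S ∩ (α ∪ β)).ncard ≤ S.ncard :=
          Set.ncard_le_ncard Set.inter_subset_left S.toFinite
        have : (M s).ncard ≤ S.ncard + ∑ i : Fin k, (f i (T i s)).ncard := by omega
        calc ((M s).ncard : ℝ) ≤ ((S.ncard + ∑ i : Fin k, (f i (T i s)).ncard : ℕ) : ℝ) := by
              exact_mod_cast this
          _ = (S.ncard : ℝ) + ∑ i : Fin k, ((f i (T i s)).ncard : ℝ) := by push_cast; ring
      have hdoneT : ∀ i : Fin k, r i < q → T i s = ℓ := by
        intro i h
        have := Nat.mul_le_mul_right ℓ (show r i + 1 ≤ q from h)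
        rw [add_mul, one_mul] at this
        simp only [hTdef]
        omega
      have htodoT : ∀ i : Fin k, q < r i → T i s = 0 := by
        intro i h
        have := Nat.mul_le_mul_right ℓ (show q + 1 ≤ r i from h)
        rw [add_mul, one_mul] at this
        simp only [hTdef]
        omega
      have hsum_split : ∑ i ∈ Finset.univ.erase i₀, ((f i (T i s)).ncard : ℝ) +
          ((f i₀ (T i₀ s)).ncard : ℝ) = ∑ i : Fin k, ((f i (T i s)).ncard : ℝ) :=
        Finset.sum_erase_add _ _ (Finset.mem_univ i₀)
      by_cases hA : (β ∩ C i₀).ncard ≤ (α ∩ C i₀).ncard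
      · -- type A current cluster
        have hkey₀ : key i₀ = 0 := by simp only [hkeydef, if_pos hA]
        have hcur : ((f i₀ (T i₀ s)).ncard : ℝ) ≤ η * ((α ∩ C i₀).ncard : ℝ) + c := by
          have h := hfcard i₀ (T i₀ s) (hTle i₀ s)
          rwa [max_eq_left hA] at h
        have hoth : ∀ i ∈ Finset.univ.erase i₀,
            ((f i (T i s)).ncard : ℝ) ≤ (((α ∩ C i).ncard : ℕ) : ℝ) := by
          intro i hi
          have hine : i ≠ i₀ := (Finset.mem_erase.mp hi).1
          have hrne : r i ≠ q := fun h => hine (hrinj i i₀ (h.trans hi₀.symm))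
          rcases Nat.lt_or_ge (r i) q with h | h
          · -- done, type A
            have hkeyi : key i ≤ key i₀ := hrkey i i₀ (by omega)
            rw [hkey₀] at hkeyi
            have hkeyi0 : (β ∩ C i).ncard ≤ (α ∩ C i).ncard := by
              by_contra hcon
              simp only [hkeydef, if_neg hcon] at hkeyi
              omega
            rw [hdoneT i h, hfl i]
            exact_mod_cast hkeyi0
          · have h' : q < r i := by omega
            rw [htodoT i h', hf0 i]
        have hsumα : ∑ i : Fin k, (((α ∩ C i).ncard : ℕ) : ℝ) ≤ (α.ncard : ℝ) := by
          have := sum_ncard_inter_le α C hdisj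
          calc ∑ i : Fin k, (((α ∩ C i).ncard : ℕ) : ℝ)
              = ((∑ i : Fin k, (α ∩ C i).ncard : ℕ) : ℝ) := by push_cast; ring
            _ ≤ (α.ncard : ℝ) := by exact_mod_cast this
        have hi₀α : (((α ∩ C i₀).ncard : ℕ) : ℝ) ≤ (α.ncard : ℝ) := by
          exact_mod_cast Set.ncard_le_ncard (Set.inter_subset_left) α.toFinite
        have hsum_erase : ∑ i ∈ Finset.univ.erase i₀, ((f i (T i s)).ncard : ℝ) ≤
            ∑ i ∈ Finset.univ.erase i₀, (((α ∩ C i).ncard : ℕ) : ℝ) :=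
          Finset.sum_le_sum hoth
        have hsplitα : ∑ i ∈ Finset.univ.erase i₀, (((α ∩ C i).ncard : ℕ) : ℝ) +
            (((α ∩ C i₀).ncard : ℕ) : ℝ) = ∑ i : Fin k, (((α ∩ C i).ncard : ℕ) : ℝ) :=
          Finset.sum_erase_add _ _ (Finset.mem_univ i₀)
        have hprod : (η - 1) * (((α ∩ C i₀).ncard : ℕ) : ℝ) ≤ (η - 1) * (α.ncard : ℝ) :=
          mul_le_mul_of_nonneg_left hi₀α (by linarith)
        have hηα : η * (α.ncard : ℝ) ≤ η * ((max α.ncard β.ncard : ℕ) : ℝ) :=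
          mul_le_mul_of_nonneg_left hmaxα (by linarith)
        have hckc : c ≤ (k : ℝ) * c := le_mul_of_one_le_left hc hk1
        nlinarith [hub, hsum_split, hcur, hsum_erase, hsplitα, hsumα]
      · -- type B current cluster
        push_neg at hA
        have hkey₀ : key i₀ = 1 := by
          simp only [hkeydef, if_neg (not_le.mpr hA)]
        have hcur : ((f i₀ (T i₀ s)).ncard : ℝ) ≤ η * ((β ∩ C i₀).ncard : ℝ) + c := by
          have h := hfcard i₀ (T i₀ s) (hTle i₀ s)
          rwa [max_eq_right hA.le] at h
        have hoth : ∀ i ∈ Finset.univ.erase i₀,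
            ((f i (T i s)).ncard : ℝ) ≤ (((β ∩ C i).ncard : ℕ) : ℝ) := by
          intro i hi
          have hine : i ≠ i₀ := (Finset.mem_erase.mp hi).1
          have hrne : r i ≠ q := fun h => hine (hrinj i i₀ (h.trans hi₀.symm))
          rcases Nat.lt_or_ge (r i) q with h | h
          · rw [hdoneT i h, hfl i]
          · have h' : q < r i := by omega
            have hkeyi : key i₀ ≤ key i := hrkey i₀ i (by omega)
            rw [hkey₀] at hkeyi
            have hkeyi1 : (α ∩ C i).ncard < (β ∩ C i).ncard := by
              by_contra hcon
              push_neg at hcon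
              simp only [hkeydef, if_pos hcon] at hkeyi
              omega
            rw [htodoT i h', hf0 i]
            exact_mod_cast hkeyi1.le
        have hsumβ : ∑ i : Fin k, (((β ∩ C i).ncard : ℕ) : ℝ) ≤ (β.ncard : ℝ) := by
          have := sum_ncard_inter_le β C hdisj
          calc ∑ i : Fin k, (((β ∩ C i).ncard : ℕ) : ℝ)
              = ((∑ i : Fin k, (β ∩ C i).ncard : ℕ) : ℝ) := by push_cast; ring
            _ ≤ (β.ncard : ℝ) := by exact_mod_cast this
        have hi₀β : (((β ∩ C i₀).ncard : ℕ) : ℝ) ≤ (β.ncard : ℝ) := by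
          exact_mod_cast Set.ncard_le_ncard (Set.inter_subset_left) β.toFinite
        have hsum_erase : ∑ i ∈ Finset.univ.erase i₀, ((f i (T i s)).ncard : ℝ) ≤
            ∑ i ∈ Finset.univ.erase i₀, (((β ∩ C i).ncard : ℕ) : ℝ) :=
          Finset.sum_le_sum hoth
        have hsplitβ : ∑ i ∈ Finset.univ.erase i₀, (((β ∩ C i).ncard : ℕ) : ℝ) +
            (((β ∩ C i₀).ncard : ℕ) : ℝ) = ∑ i : Fin k, (((β ∩ C i).ncard : ℕ) : ℝ) :=
          Finset.sum_erase_add _ _ (Finset.mem_univ i₀)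
        have hprod : (η - 1) * (((β ∩ C i₀).ncard : ℕ) : ℝ) ≤ (η - 1) * (β.ncard : ℝ) :=
          mul_le_mul_of_nonneg_left hi₀β (by linarith)
        have hηβ : η * (β.ncard : ℝ) ≤ η * ((max α.ncard β.ncard : ℕ) : ℝ) :=
          mul_le_mul_of_nonneg_left hmaxβ (by linarith)
        have hckc : c ≤ (k : ℝ) * c := le_mul_of_one_le_left hc hk1
        nlinarith [hub, hsum_split, hcur, hsum_erase, hsplitβ, hsumβ]
  -- end point bounds
  have hαbound : ((α.ncard : ℕ) : ℝ) ≤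
      η * ((max α.ncard β.ncard : ℕ) : ℝ) + (S.ncard : ℝ) + (k : ℝ) * c := by
    have hm : ((max α.ncard β.ncard : ℕ) : ℝ) ≤ η * ((max α.ncard β.ncard : ℕ) : ℝ) :=
      le_mul_of_one_le_left hmax0 hη1
    linarith
  have hβbound : ((β.ncard : ℕ) : ℝ) ≤
      η * ((max α.ncard β.ncard : ℕ) : ℝ) + (S.ncard : ℝ) + (k : ℝ) * c := by
    have hm : ((max α.ncard β.ncard : ℕ) : ℝ) ≤ η * ((max α.ncard β.ncard : ℕ) : ℝ) :=
      le_mul_of_one_le_left hmax0 hη1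
    linarith
  -- independent diff sets
  have hindepβα : IsIndepSet G (β \ α) := by
    intro u v hu hv hadj
    rcases hα hadj with h | h
    · exact hu.2 h
    · exact hv.2 h
  have hindepαβ : IsIndepSet G (α \ β) := by
    intro u v hu hv hadj
    rcases hβ hadj with h | h
    · exact hu.2 h
    · exact hv.2 h
  -- assemble the global schedule
  set g : ℕ → Set V := fun t => if t = 0 then α else if t ≤ k * ℓ + 1 then M (t - 1) else β
    with hgdef
  refine ⟨k * ℓ + 2, g, ⟨?_, ?_, ?_, ?_⟩, ?_⟩
  · simp [hgdef]
  · simp only [hgdef]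
    rw [if_neg (by omega), if_neg (by omega)]
  · intro t ht
    simp only [hgdef]
    by_cases h0 : t = 0
    · rw [if_pos h0]; exact hα
    by_cases h1 : t ≤ k * ℓ + 1
    · rw [if_neg h0, if_pos h1]; exact hMcov _
    · rw [if_neg h0, if_neg h1]; exact hβ
  · intro t ht
    simp only [hgdef]
    by_cases h0 : t = 0
    · subst h0
      simp only [if_pos rfl, if_neg (Nat.one_ne_zero), if_pos (by omega : 1 ≤ k * ℓ + 1)]
      refine indepSet_mono ?_ hindepβα
      intro v hv
      rw [Set.mem_symmDiff] at hv
      rw [show (1 : ℕ) - 1 = 0 from rfl, hM0] at hv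
      rcases hv with ⟨hv1, hv2⟩ | ⟨hv1, hv2⟩
      · exact absurd (Or.inl hv1) hv2
      · rcases hv1 with h | h
        · exact absurd h hv2
        · exact ⟨h.2, hv2⟩
    by_cases hlast : t = k * ℓ + 1
    · subst hlast
      rw [if_neg h0, if_pos (le_refl _), if_neg (by omega), if_neg (by omega)]
      rw [show k * ℓ + 1 - 1 = k * ℓ from rfl, hMend]
      refine indepSet_mono ?_ hindepαβ
      intro v hv
      rw [Set.mem_symmDiff] at hv
      rcases hv with ⟨hv1, hv2⟩ | ⟨hv1, hv2⟩
      · rcases hv1 with h | h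
        · exact absurd h hv2
        · exact ⟨h.2, hv2⟩
      · exact absurd (Or.inl hv1) hv2
    · have h1 : 1 ≤ t := by omega
      have h2 : t ≤ k * ℓ := by omega
      rw [if_neg h0, if_pos (by omega : t ≤ k * ℓ + 1), if_neg (by omega : ¬ t + 1 = 0),
        if_pos (by omega : t + 1 ≤ k * ℓ + 1)]
      have he : t + 1 - 1 = (t - 1) + 1 := by omega
      rw [he]
      exact hstep (t - 1) (by omega)
  · intro t ht
    simp only [hgdef]
    by_cases h0 : t = 0
    · rw [if_pos h0]; exact hαbound
    by_cases h1 : t ≤ k * ℓ + 1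
    · rw [if_neg h0, if_pos h1]
      exact hMcard (t - 1) (by omega)
    · rw [if_neg h0, if_neg h1]; exact hβbound
end
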